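/- arXiv:1310.4316 — 5 statements merged into one kernel-verified Lean document; each statement's English description precedes it below -/
import Mathlib

section
/- For every 0 < α < 1, the probability generating function of the stopping time τ_{AB} satisfies E(α^{τ_{AB}}) = (1 + (1−α)·(A∗B)(α)) / (1 + (1−α)·(B∗B)(α)). -/
open MeasureTheory ProbabilityTheory Finset

/-- The probability `Pr(C)` of a pattern (word) `C`, with letter distribution `p`. -/
def patProb {S : Type*} (p : S → ℝ) (C : List S) : ℝ := (C.map p).prod

/-- `lastK C k` is the pattern `C^(k)` formed by the last `k` letters of `C`. -/
def lastK {S : Type*} (C : List S) (k : ℕ) : List S := C.drop (C.length - k)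

/-- The correlation function `(A ∗ B)(α)`. -/
noncomputable def corr {S : Type*} [DecidableEq S] (p : S → ℝ) (A B : List S) (α : ℝ) : ℝ :=
  ∑ k ∈ Finset.Icc 1 (min A.length B.length),
    (if lastK A k = List.take k B then (1 : ℝ) else 0) / (patProb p (List.take k B) * α ^ k)

/-- The word `a₁…a_{l-1}ξ₀ξ₁…ξ_k = A ++ ξ₁…ξ_k` observed at time `k` (here `ξ i` denotes
the `(i+1)`-st letter generated by the casino, and `ξ₀` is the last letter of `A`). -/
def obsWord {S : Type*} {Ω : Type*} (A : List S) (ξ : ℕ → Ω → S) (k : ℕ) (ω : Ω) : List S :=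
  A ++ List.ofFn fun i : Fin k => ξ i ω

/-- The stopping time `τ_{AB}`: the least `k ≥ 0` such that `B` is a contiguous subpattern of
`a₁…a_{l-1}ξ₀ξ₁…ξ_k` (with `ξ₀ = a_l`). -/
noncomputable def hitTime {S : Type*} {Ω : Type*} (A B : List S) (ξ : ℕ → Ω → S) (ω : Ω) : ℕ :=
  sInf {k : ℕ | B <:+: obsWord A ξ k ω}

set_option linter.unusedSectionVars false
set_option linter.unusedVariables false

namespace PGFAux

variable {S : Type*} {Ω : Type*}

/-! ### List lemmas -/

lemma suffix_iff_lastK {B L : List S} : B <:+ L ↔ lastK L B.length = B := by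
  rw [List.suffix_iff_eq_drop]; exact ⟨fun h => h.symm, fun h => h.symm⟩

lemma lastK_append_right (W : List S) {v : List S} {k : ℕ} (hk : k ≤ v.length) :
    lastK (W ++ v) k = lastK v k := by
  simp only [lastK, List.length_append]
  rw [show W.length + v.length - k = W.length + (v.length - k) by omega, List.drop_append]
  simp

lemma lastK_of_suffix {B W : List S} (h : B <:+ W) {k : ℕ} (hk : k ≤ B.length) :
    lastK W k = lastK B k := by
  obtain ⟨u, rfl⟩ := h; exact lastK_append_right u hk

lemma suffix_append_iff {B W v : List S} (hv : v.length ≤ B.length) :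
    B <:+ W ++ v ↔ (B.take (B.length - v.length) <:+ W ∧ v = B.drop (B.length - v.length)) := by
  constructor
  · rintro ⟨u, hu⟩
    have hsplit : (u ++ B.take (B.length - v.length)) ++ B.drop (B.length - v.length) = W ++ v := by
      rw [List.append_assoc, List.take_append_drop]; exact hu
    have hlen : (B.drop (B.length - v.length)).length = v.length := by simp; omega
    obtain ⟨h1, h2⟩ := List.append_inj' hsplit hlen
    exact ⟨⟨u, h1⟩, h2.symm⟩
  · rintro ⟨⟨u, hu⟩, hv'⟩
    refine ⟨u, ?_⟩
    calc u ++ B = (u ++ B.take (B.length - v.length)) ++ B.drop (B.length - v.length) := by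
          rw [List.append_assoc, List.take_append_drop]
      _ = W ++ v := by rw [hu, ← hv']

lemma suffix_append_iff' {B W v : List S} {t : ℕ} (hlen : v.length = t) (hv : t ≤ B.length) :
    B <:+ W ++ v ↔ (B.take (B.length - t) <:+ W ∧ v = B.drop (B.length - t)) := by
  subst hlen; exact suffix_append_iff hv

lemma suffix_append_right_iff {B W v : List S} (hv : B.length ≤ v.length) :
    B <:+ W ++ v ↔ B <:+ v := by
  rw [suffix_iff_lastK, suffix_iff_lastK, lastK_append_right W hv]

lemma isSuffix_or_infix_dropLast {B L : List S} (h : B <:+: L) : B <:+ L ∨ B <:+: L.dropLast := by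
  obtain ⟨x, y, hxy⟩ := h
  cases y with
  | nil => left; exact ⟨x, by simpa using hxy⟩
  | cons a y' =>
    right
    refine ⟨x, (a :: y').dropLast, ?_⟩
    rw [← hxy, List.append_assoc, List.dropLast_append_of_ne_nil (by simp), ← List.append_assoc]

lemma obsWord_zero (A : List S) (ξ : ℕ → Ω → S) (ω : Ω) : obsWord A ξ 0 ω = A := by
  simp [obsWord]

lemma obsWord_add (A : List S) (ξ : ℕ → Ω → S) (j t : ℕ) (ω : Ω) :
    obsWord A ξ (j + t) ω = obsWord A ξ j ω ++ List.ofFn (fun i : Fin t => ξ (j + i) ω) := by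
  simp [obsWord, List.ofFn_add, List.append_assoc]

lemma obsWord_succ (A : List S) (ξ : ℕ → Ω → S) (k : ℕ) (ω : Ω) :
    obsWord A ξ (k + 1) ω = obsWord A ξ k ω ++ [ξ k ω] := by
  rw [obsWord_add]
  simp [List.ofFn_succ]

lemma obsWord_dropLast (A : List S) (ξ : ℕ → Ω → S) (k : ℕ) (ω : Ω) :
    (obsWord A ξ (k + 1) ω).dropLast = obsWord A ξ k ω := by
  rw [obsWord_succ]; exact List.dropLast_concat

lemma suffix_of_first {A B : List S} {ξ : ℕ → Ω → S} {ω : Ω} (hBA : ¬ B <:+: A.dropLast)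
    (j : ℕ) (hj : B <:+: obsWord A ξ j ω) (hmin : ∀ i < j, ¬ B <:+: obsWord A ξ i ω) :
    B <:+ obsWord A ξ j ω := by
  rcases isSuffix_or_infix_dropLast hj with h | h
  · exact h
  · exfalso
    cases j with
    | zero => rw [obsWord_zero] at h; exact hBA h
    | succ k => rw [obsWord_dropLast] at h; exact hmin k (Nat.lt_succ_self k) h

lemma ofFn_get_cast {u : List S} {n : ℕ} (h : u.length = n) :
    List.ofFn (fun i : Fin n => u.get (Fin.cast h.symm i)) = u := by
  subst h; simp [List.ofFn_get]

lemma ofFn_eq_iff {n : ℕ} {f : Fin n → S} {u : List S} (h : u.length = n) :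
    List.ofFn f = u ↔ ∀ i : Fin n, f i = u.get (Fin.cast h.symm i) := by
  conv_lhs => rw [← ofFn_get_cast h]
  rw [List.ofFn_injective.eq_iff, funext_iff]

lemma patProb_eq_prod (p : S → ℝ) (u : List S) :
    patProb p u = ∏ i : Fin u.length, p (u.get i) := by
  conv_lhs => rw [patProb, ← List.ofFn_get u]
  rw [List.map_ofFn, List.prod_ofFn]
  rfl

lemma prod_get_cast {u : List S} {t : ℕ} (h : u.length = t) (p : S → ℝ) :
    (∏ i : Fin t, p (u.get (Fin.cast h.symm i))) = patProb p u := by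
  subst h; simp [patProb_eq_prod]

lemma patProb_append (p : S → ℝ) (x y : List S) :
    patProb p (x ++ y) = patProb p x * patProb p y := by
  simp [patProb]

lemma patProb_nonneg {p : S → ℝ} (hp : ∀ a, 0 < p a) (u : List S) : 0 ≤ patProb p u := by
  induction u with
  | nil => simp [patProb]
  | cons a u ih =>
    simp only [patProb, List.map_cons, List.prod_cons] at *
    exact mul_nonneg (hp a).le ih

lemma patProb_pos {p : S → ℝ} (hp : ∀ a, 0 < p a) (u : List S) : 0 < patProb p u := by
  induction u with
  | nil => simp [patProb]
  | cons a u ih =>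
    simp only [patProb, List.map_cons, List.prod_cons] at *
    exact mul_pos (hp a) ih

lemma patProb_le_one {p : S → ℝ} (hp : ∀ a, 0 < p a) (hp1 : ∀ a, p a ≤ 1) (u : List S) :
    patProb p u ≤ 1 := by
  induction u with
  | nil => simp [patProb]
  | cons a u ih =>
    simp only [patProb, List.map_cons, List.prod_cons] at *
    exact mul_le_one₀ (hp1 a) (patProb_nonneg hp u) ih

/-! ### Cylinder sets -/

section Cylinders

variable [Fintype S] [DecidableEq S] [MeasurableSpace S]
  [MeasurableSingletonClass S] [MeasurableSpace Ω]

/-- The tuple of the first `n` letters. -/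
def tupF (ξ : ℕ → Ω → S) (n : ℕ) (ω : Ω) : Fin n → S := fun i => ξ i ω

/-- The cylinder event prescribing letters `j, j+1, …, j+n-1`. -/
def cylF (ξ : ℕ → Ω → S) (j n : ℕ) (v : Fin n → S) : Set Ω :=
  {ω | ∀ i : Fin n, ξ (j + i) ω = v i}

lemma measurable_tupF {ξ : ℕ → Ω → S} (hmeas : ∀ n, Measurable (ξ n)) (n : ℕ) :
    Measurable (tupF ξ n) :=
  measurable_pi_lambda _ fun i => hmeas i

lemma measurableSet_cylF {ξ : ℕ → Ω → S} (hmeas : ∀ n, Measurable (ξ n)) (j n : ℕ)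
    (v : Fin n → S) : MeasurableSet (cylF ξ j n v) := by
  have : cylF ξ j n v = ⋂ i : Fin n, (ξ (j + i)) ⁻¹' {v i} := by
    ext ω; simp [cylF, Set.mem_iInter]
  rw [this]
  exact MeasurableSet.iInter fun i => (hmeas _) (measurableSet_singleton _)

lemma tupF_preimage_singleton (ξ : ℕ → Ω → S) (n : ℕ) (v : Fin n → S) :
    (tupF ξ n) ⁻¹' {v} = cylF ξ 0 n v := by
  ext ω
  simp [tupF, cylF, funext_iff]

lemma cylF_glue (ξ : ℕ → Ω → S) (n t : ℕ) (a : Fin n → S) (v : Fin t → S) :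
    cylF ξ 0 n a ∩ cylF ξ n t v = cylF ξ 0 (n + t) (Fin.append a v) := by
  ext ω
  simp only [cylF, Set.mem_inter_iff, Set.mem_setOf_eq]
  constructor
  · rintro ⟨h1, h2⟩ i
    refine Fin.addCases (fun i => ?_) (fun i => ?_) i
    · rw [Fin.append_left]; simpa using h1 i
    · rw [Fin.append_right]; simpa using h2 i
  · intro h
    refine ⟨fun i => ?_, fun i => ?_⟩
    · have := h (Fin.castAdd t i)
      rw [Fin.append_left] at this
      simpa using this
    · have := h (Fin.natAdd n i)
      rw [Fin.append_right] at this
      simpa using this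

variable {μ : Measure Ω} {p : S → ℝ} {ξ : ℕ → Ω → S}

lemma meas_cylF_zero
    (hindep : iIndepFun ξ μ)
    (hdist : ∀ n a, μ {ω | ξ n ω = a} = ENNReal.ofReal (p a))
    (hp : ∀ a, 0 < p a) (n : ℕ) (v : Fin n → S) :
    μ (cylF ξ 0 n v) = ENNReal.ofReal (∏ i, p (v i)) := by
  classical
  have hset : cylF ξ 0 n v =
      ⋂ i ∈ Finset.range n,
        (fun i => if h : i < n then ξ i ⁻¹' {v ⟨i, h⟩} else Set.univ) i := by
    ext ω
    simp only [cylF, Set.mem_setOf_eq, Set.mem_iInter, Finset.mem_range]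
    constructor
    · intro h i hi
      rw [dif_pos hi]
      simpa using h ⟨i, hi⟩
    · intro h i
      have := h i i.isLt
      rw [dif_pos i.isLt] at this
      simpa using this
  rw [hset, hindep.meas_biInter (fun i hi => ?_)]
  · have hprod : ∀ i ∈ Finset.range n,
        μ ((fun i => if h : i < n then ξ i ⁻¹' {v ⟨i, h⟩} else Set.univ) i)
          = (fun i => if h : i < n then ENNReal.ofReal (p (v ⟨i, h⟩)) else 1) i := by
      intro i hi
      rw [Finset.mem_range] at hi
      simp only [dif_pos hi]
      rw [← hdist i (v ⟨i, hi⟩)]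
      rfl
    rw [Finset.prod_congr rfl hprod, ← Fin.prod_univ_eq_prod_range,
      ENNReal.ofReal_prod_of_nonneg (fun i _ => (hp (v i)).le)]
    exact Finset.prod_congr rfl fun i _ => by rw [dif_pos i.isLt]
  · rw [Finset.mem_range] at hi
    simp only [dif_pos hi]
    exact ⟨{v ⟨i, hi⟩}, measurableSet_singleton _, rfl⟩

lemma measure_inter_cylF
    (hmeas : ∀ n, Measurable (ξ n))
    (hindep : iIndepFun ξ μ)
    (hdist : ∀ n a, μ {ω | ξ n ω = a} = ENNReal.ofReal (p a))
    (hp : ∀ a, 0 < p a) (n : ℕ) (E : Set Ω)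
    (hE : ∀ ω ω', tupF ξ n ω = tupF ξ n ω' → ω ∈ E → ω' ∈ E)
    (t : ℕ) (v : Fin t → S) :
    μ (E ∩ cylF ξ n t v) = μ E * ENNReal.ofReal (∏ i, p (v i)) := by
  classical
  set D : Finset (Fin n → S) := Finset.univ.filter (fun a => ∀ ω, tupF ξ n ω = a → ω ∈ E) with hD
  have hEeq : E = ⋃ a ∈ D, (tupF ξ n) ⁻¹' {a} := by
    ext ω
    simp only [Set.mem_iUnion, Set.mem_preimage, Set.mem_singleton_iff, hD,
      Finset.mem_filter, Finset.mem_univ, true_and]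
    constructor
    · intro hw
      exact ⟨tupF ξ n ω, fun ω' h => hE ω ω' h.symm hw, rfl⟩
    · rintro ⟨a, ha, h⟩
      exact ha ω h
  have hdisj : (↑D : Set (Fin n → S)).PairwiseDisjoint
      (fun a => (tupF ξ n) ⁻¹' {a} ∩ cylF ξ n t v) := by
    intro a _ b _ hab
    refine Set.disjoint_left.mpr ?_
    rintro ω ⟨ha, _⟩ ⟨hb, _⟩
    exact hab (ha.symm.trans hb)
  have hterm : ∀ a : Fin n → S,
      μ ((tupF ξ n) ⁻¹' {a} ∩ cylF ξ n t v)
        = ENNReal.ofReal (∏ i, p (a i)) * ENNReal.ofReal (∏ i, p (v i)) := by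
    intro a
    rw [tupF_preimage_singleton, cylF_glue, meas_cylF_zero hindep hdist hp,
      Fin.prod_univ_add, ENNReal.ofReal_mul (Finset.prod_nonneg fun i _ => (hp _).le)]
    congr 1
    · exact congrArg _ (Finset.prod_congr rfl fun i _ => by rw [Fin.append_left])
    · exact congrArg _ (Finset.prod_congr rfl fun i _ => by rw [Fin.append_right])
  have hterm0 : ∀ a : Fin n → S,
      μ ((tupF ξ n) ⁻¹' {a}) = ENNReal.ofReal (∏ i, p (a i)) := by
    intro a
    rw [tupF_preimage_singleton, meas_cylF_zero hindep hdist hp]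
  have hmeas1 : ∀ a : Fin n → S, MeasurableSet ((tupF ξ n) ⁻¹' {a} ∩ cylF ξ n t v) :=
    fun a => ((measurable_tupF hmeas n) (measurableSet_singleton _)).inter
      (measurableSet_cylF hmeas n t v)
  have h1 : E ∩ cylF ξ n t v = ⋃ a ∈ D, ((tupF ξ n) ⁻¹' {a} ∩ cylF ξ n t v) := by
    rw [hEeq, Set.iUnion₂_inter]
  have h2 : μ (E ∩ cylF ξ n t v) = ∑ a ∈ D, μ ((tupF ξ n) ⁻¹' {a} ∩ cylF ξ n t v) := by
    rw [h1]
    exact measure_biUnion_finset hdisj fun a _ => hmeas1 a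
  have h3 : μ E = ∑ a ∈ D, ENNReal.ofReal (∏ i, p (a i)) := by
    rw [hEeq]
    rw [measure_biUnion_finset (fun a _ b _ hab => Set.disjoint_left.mpr
        (fun ω ha hb => hab (ha.symm.trans hb)))
      (fun a _ => (measurable_tupF hmeas n) (measurableSet_singleton _))]
    exact Finset.sum_congr rfl fun a _ => hterm0 a
  rw [h2, h3, Finset.sum_mul]
  exact Finset.sum_congr rfl fun a _ => hterm a

end Cylinders

end PGFAux
section Events

open List PGFAux

variable {S : Type*} {Ω : Type*} [Fintype S] [DecidableEq S] [MeasurableSpace S]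
  [MeasurableSingletonClass S] [MeasurableSpace Ω]

/-- The event that `B` occurs in the word observed at time `k`. -/
def PsetD (A B : List S) (ξ : ℕ → Ω → S) (k : ℕ) : Set Ω := {ω | B <:+: obsWord A ξ k ω}

/-- The event that `B` occurs for the first time at time `j`. -/
def EsetD (A B : List S) (ξ : ℕ → Ω → S) (j : ℕ) : Set Ω :=
  {ω | B <:+: obsWord A ξ j ω ∧ ∀ i < j, ¬ B <:+: obsWord A ξ i ω}

/-- The event that the word observed at time `k` ends with `B`. -/
def SsetD (A B : List S) (ξ : ℕ → Ω → S) (k : ℕ) : Set Ω := {ω | B <:+ obsWord A ξ k ω}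

namespace PGFAux

variable {ξ : ℕ → Ω → S} {A B : List S}

lemma measurableSet_PsetD (hmeas : ∀ n, Measurable (ξ n)) (A B : List S) (k : ℕ) :
    MeasurableSet (PsetD A B ξ k) := by
  have : PsetD A B ξ k = tupF ξ k ⁻¹' {v | B <:+: A ++ List.ofFn v} := rfl
  rw [this]
  exact measurable_tupF hmeas k (Set.toFinite _).measurableSet

lemma measurableSet_SsetD (hmeas : ∀ n, Measurable (ξ n)) (A B : List S) (k : ℕ) :
    MeasurableSet (SsetD A B ξ k) := by
  have : SsetD A B ξ k = tupF ξ k ⁻¹' {v | B <:+ A ++ List.ofFn v} := rfl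
  rw [this]
  exact measurable_tupF hmeas k (Set.toFinite _).measurableSet

lemma measurableSet_EsetD (hmeas : ∀ n, Measurable (ξ n)) (A B : List S) (j : ℕ) :
    MeasurableSet (EsetD A B ξ j) := by
  have : EsetD A B ξ j = PsetD A B ξ j ∩ ⋂ i : Fin j, (PsetD A B ξ i)ᶜ := by
    ext ω
    simp only [EsetD, PsetD, Set.mem_setOf_eq, Set.mem_inter_iff, Set.mem_iInter,
      Set.mem_compl_iff]
    exact and_congr Iff.rfl ⟨fun h i => h i i.isLt, fun h i hi => h ⟨i, hi⟩⟩
  rw [this]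
  exact (measurableSet_PsetD hmeas A B j).inter
    (MeasurableSet.iInter fun i => (measurableSet_PsetD hmeas A B i).compl)

lemma obsWord_eq_of_tupF_eq {n k : ℕ} (hk : k ≤ n) {ω ω' : Ω}
    (h : tupF ξ n ω = tupF ξ n ω') : obsWord A ξ k ω = obsWord A ξ k ω' := by
  unfold obsWord
  congr 1
  exact congrArg List.ofFn (funext fun i => congrFun h ⟨i.1, lt_of_lt_of_le i.2 hk⟩)

lemma EsetD_det {n j : ℕ} (hj : j ≤ n) (ω ω' : Ω) (h : tupF ξ n ω = tupF ξ n ω')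
    (hω : ω ∈ EsetD A B ξ j) : ω' ∈ EsetD A B ξ j := by
  obtain ⟨h1, h2⟩ := hω
  refine ⟨by rwa [← obsWord_eq_of_tupF_eq hj h], fun i hi => ?_⟩
  rw [← obsWord_eq_of_tupF_eq (le_trans hi.le hj) h]
  exact h2 i hi

lemma EsetD_suffix (hBA : ¬ B <:+: A.dropLast) {j : ℕ} {ω : Ω} (hω : ω ∈ EsetD A B ξ j) :
    B <:+ obsWord A ξ j ω :=
  suffix_of_first hBA j hω.1 hω.2

lemma EsetD_disjoint (A B : List S) (ξ : ℕ → Ω → S) {i j : ℕ} (hij : i ≠ j) :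
    Disjoint (EsetD A B ξ i) (EsetD A B ξ j) := by
  rcases hij.lt_or_gt with h | h
  · exact Set.disjoint_left.mpr fun ω hi hj => hj.2 i h hi.1
  · exact Set.disjoint_left.mpr fun ω hi hj => hi.2 j h hj.1

/-- first-occurrence decomposition of the suffix event -/
lemma Sset_decomp (A B : List S) (ξ : ℕ → Ω → S) (k : ℕ) :
    SsetD A B ξ k = ⋃ j ∈ Finset.range (k + 1), (EsetD A B ξ j ∩ SsetD A B ξ k) := by
  ext ω
  simp only [Set.mem_iUnion, Finset.mem_range, Set.mem_inter_iff, exists_prop]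
  constructor
  · intro hω
    have hP : k ∈ {i | B <:+: obsWord A ξ i ω} := hω.isInfix
    have hne : {i | B <:+: obsWord A ξ i ω}.Nonempty := ⟨k, hP⟩
    have hle : sInf {i | B <:+: obsWord A ξ i ω} ≤ k := Nat.sInf_le hP
    refine ⟨sInf {i | B <:+: obsWord A ξ i ω}, by omega,
      ⟨Nat.sInf_mem hne, fun i hi hPi => ?_⟩, hω⟩
    have hle2 : sInf {i | B <:+: obsWord A ξ i ω} ≤ i := Nat.sInf_le hPi
    omega
  · rintro ⟨j, _, _, hω⟩
    exact hω

/-- the set identity for `t < |B|` -/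
lemma Eset_inter_Sset_small (hBA : ¬ B <:+: A.dropLast) {t : ℕ} (ht : t < B.length) (j : ℕ)
    (hdl : (B.drop (B.length - t)).length = t) :
    EsetD A B ξ j ∩ SsetD A B ξ (j + t) =
      if lastK B (B.length - t) = B.take (B.length - t)
      then EsetD A B ξ j ∩
        cylF ξ j t (fun i => (B.drop (B.length - t)).get (Fin.cast hdl.symm i))
      else ∅ := by
  have key : ∀ ω, ω ∈ EsetD A B ξ j →
      (ω ∈ SsetD A B ξ (j + t) ↔ (lastK B (B.length - t) = B.take (B.length - t) ∧
        ω ∈ cylF ξ j t (fun i => (B.drop (B.length - t)).get (Fin.cast hdl.symm i)))) := by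
    intro ω hω
    have hsuf : B <:+ obsWord A ξ j ω := EsetD_suffix hBA hω
    show B <:+ obsWord A ξ (j + t) ω ↔ _
    rw [obsWord_add, suffix_append_iff' (by simp) (le_of_lt ht)]
    apply and_congr
    · rw [suffix_iff_lastK]
      have hlt : (B.take (B.length - t)).length = B.length - t := by simp
      rw [hlt, lastK_of_suffix hsuf (by omega)]
    · rw [ofFn_eq_iff hdl]
      exact Iff.rfl
  split_ifs with hcond
  · ext ω
    constructor
    · rintro ⟨h1, h2⟩; exact ⟨h1, ((key ω h1).mp h2).2⟩
    · rintro ⟨h1, h2⟩; exact ⟨h1, (key ω h1).mpr ⟨hcond, h2⟩⟩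
  · ext ω
    simp only [Set.mem_empty_iff_false, iff_false]
    rintro ⟨h1, h2⟩
    exact hcond ((key ω h1).mp h2).1

/-- the set identity for `|B| ≤ k` -/
lemma Sset_large (A B : List S) (ξ : ℕ → Ω → S) (r : ℕ) :
    SsetD A B ξ (r + B.length) = cylF ξ r B.length B.get := by
  ext ω
  show B <:+ obsWord A ξ (r + B.length) ω ↔ _
  rw [obsWord_add, suffix_append_right_iff (by simp)]
  constructor
  · intro h
    have heq : B = List.ofFn (fun i : Fin B.length => ξ (r + i) ω) :=
      h.eq_of_length (by simp)
    intro i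
    have := (ofFn_eq_iff (f := fun i : Fin B.length => ξ (r + i) ω) (rfl)).mp heq.symm i
    exact this
  · intro h
    have : List.ofFn (fun i : Fin B.length => ξ (r + i) ω) = B :=
      (ofFn_eq_iff rfl).mpr (fun i => h i)
    rw [this]

/-- the set identity for `k < |B|` -/
lemma Sset_small {k : ℕ} (hk : k < B.length)
    (hdl : (B.drop (B.length - k)).length = k) :
    SsetD A B ξ k =
      if lastK A (B.length - k) = B.take (B.length - k)
      then cylF ξ 0 k (fun i => (B.drop (B.length - k)).get (Fin.cast hdl.symm i))
      else ∅ := by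
  have key : ∀ ω : Ω, ω ∈ SsetD A B ξ k ↔
      (lastK A (B.length - k) = B.take (B.length - k) ∧
        ω ∈ cylF ξ 0 k (fun i => (B.drop (B.length - k)).get (Fin.cast hdl.symm i))) := by
    intro ω
    show B <:+ A ++ _ ↔ _
    rw [suffix_append_iff' (by simp) (le_of_lt hk)]
    apply and_congr
    · rw [suffix_iff_lastK]
      have hlt : (B.take (B.length - k)).length = B.length - k := by simp
      rw [hlt]
    · rw [ofFn_eq_iff hdl]
      constructor
      · intro h i; simpa using h i
      · intro h i; simpa using h i
  split_ifs with hcond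
  · ext ω; rw [key ω]; simp [hcond]
  · ext ω
    simp only [Set.mem_empty_iff_false, iff_false]
    intro h
    exact hcond ((key ω).mp h).1

end PGFAux

end Events
namespace PGFAux

section MeasureEvents

variable {S : Type*} {Ω : Type*} [Fintype S] [DecidableEq S] [MeasurableSpace S]
  [MeasurableSingletonClass S] [MeasurableSpace Ω]
  {μ : MeasureTheory.Measure Ω} [MeasureTheory.IsProbabilityMeasure μ]
  {p : S → ℝ} {ξ : ℕ → Ω → S} {A B : List S}

variable (hmeas : ∀ n, Measurable (ξ n))
  (hindep : ProbabilityTheory.iIndepFun ξ μ)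
  (hdist : ∀ n a, μ {ω | ξ n ω = a} = ENNReal.ofReal (p a))
  (hp : ∀ a, 0 < p a)

include hmeas hindep hdist hp

lemma meas_Sset_small {k : ℕ} (hk : k < B.length) :
    μ (SsetD A B ξ k) = ENNReal.ofReal
      (if lastK A (B.length - k) = B.take (B.length - k)
       then patProb p (B.drop (B.length - k)) else 0) := by
  have hdl : (B.drop (B.length - k)).length = k := by simp; omega
  rw [Sset_small hk hdl]
  split_ifs with hcond
  · have h := measure_inter_cylF hmeas hindep hdist hp 0 Set.univ
      (fun ω ω' _ _ => Set.mem_univ ω') k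
      (fun i => (B.drop (B.length - k)).get (Fin.cast hdl.symm i))
    rw [Set.univ_inter] at h
    rw [h, MeasureTheory.measure_univ, one_mul, prod_get_cast hdl]
  · simp

lemma meas_Sset_large {k : ℕ} (hk : B.length ≤ k) :
    μ (SsetD A B ξ k) = ENNReal.ofReal (patProb p B) := by
  obtain ⟨r, rfl⟩ : ∃ r, k = r + B.length := ⟨k - B.length, by omega⟩
  rw [Sset_large]
  have h := measure_inter_cylF hmeas hindep hdist hp r Set.univ
    (fun ω ω' _ _ => Set.mem_univ ω') B.length B.get
  rw [Set.univ_inter] at h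
  rw [h, MeasureTheory.measure_univ, one_mul, ← patProb_eq_prod]

lemma meas_Eset_inter_Sset_small (hBA : ¬ B <:+: A.dropLast) {t : ℕ} (ht : t < B.length)
    (j : ℕ) :
    μ (EsetD A B ξ j ∩ SsetD A B ξ (j + t)) = μ (EsetD A B ξ j) * ENNReal.ofReal
      (if lastK B (B.length - t) = B.take (B.length - t)
       then patProb p (B.drop (B.length - t)) else 0) := by
  have hdl : (B.drop (B.length - t)).length = t := by simp; omega
  rw [Eset_inter_Sset_small hBA ht j hdl]
  split_ifs with hcond
  · rw [measure_inter_cylF hmeas hindep hdist hp j (EsetD A B ξ j)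
      (fun ω ω' h hω => EsetD_det le_rfl ω ω' h hω) t
      (fun i => (B.drop (B.length - t)).get (Fin.cast hdl.symm i)), prod_get_cast hdl]
  · simp

lemma meas_Eset_inter_Sset_large {t : ℕ} (ht : B.length ≤ t) (j : ℕ) :
    μ (EsetD A B ξ j ∩ SsetD A B ξ (j + t)) =
      μ (EsetD A B ξ j) * ENNReal.ofReal (patProb p B) := by
  obtain ⟨r, hr⟩ : ∃ r, j + t = r + B.length := ⟨j + t - B.length, by omega⟩
  have hjr : j ≤ r := by omega
  rw [hr, Sset_large]
  rw [measure_inter_cylF hmeas hindep hdist hp r (EsetD A B ξ j)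
    (fun ω ω' h hω => EsetD_det hjr ω ω' h hω) B.length B.get, ← patProb_eq_prod]

end MeasureEvents

section HitTime

variable {S : Type*} {Ω : Type*} [Fintype S] [DecidableEq S] [MeasurableSpace S]
  [MeasurableSingletonClass S] [MeasurableSpace Ω]
  {ξ : ℕ → Ω → S} {A B : List S}

lemma hitTime_eq_of_mem {j : ℕ} {ω : Ω} (hω : ω ∈ EsetD A B ξ j) : hitTime A B ξ ω = j := by
  have h1 : j ∈ {k : ℕ | B <:+: obsWord A ξ k ω} := hω.1
  refine le_antisymm (Nat.sInf_le h1) ?_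
  by_contra h
  push_neg at h
  exact hω.2 _ h (Nat.sInf_mem ⟨j, h1⟩)

lemma hitTime_preimage (A B : List S) (ξ : ℕ → Ω → S) (j : ℕ) :
    hitTime A B ξ ⁻¹' {j} =
      EsetD A B ξ j ∪ (if j = 0 then (⋃ i, PsetD A B ξ i)ᶜ else ∅) := by
  ext ω
  simp only [Set.mem_preimage, Set.mem_singleton_iff, Set.mem_union]
  by_cases hne : ∃ i, B <:+: obsWord A ξ i ω
  · have hne' : {i : ℕ | B <:+: obsWord A ξ i ω}.Nonempty := hne
    constructor
    · intro h
      left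
      refine ⟨h ▸ Nat.sInf_mem hne', fun i hi hPi => ?_⟩
      have := Nat.sInf_le (show i ∈ {k : ℕ | B <:+: obsWord A ξ k ω} from hPi)
      unfold hitTime at h
      omega
    · rintro (hE | hbad)
      · exact hitTime_eq_of_mem hE
      · by_cases hj : j = 0
        · rw [if_pos hj] at hbad
          simp only [Set.mem_compl_iff, Set.mem_iUnion, not_exists] at hbad
          obtain ⟨i, hi⟩ := hne
          exact absurd hi (hbad i)
        · rw [if_neg hj] at hbad
          exact absurd hbad (Set.notMem_empty ω)
  · push_neg at hne
    have hset : {k : ℕ | B <:+: obsWord A ξ k ω} = ∅ :=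
      Set.eq_empty_iff_forall_notMem.mpr hne
    have hτ : hitTime A B ξ ω = 0 := by unfold hitTime; rw [hset, Nat.sInf_empty]
    constructor
    · intro h
      right
      rw [if_pos (by omega)]
      simp only [Set.mem_compl_iff, Set.mem_iUnion, not_exists]
      exact fun i hi => hne i hi
    · rintro (hE | hbad)
      · exact absurd hE.1 (hne j)
      · by_cases hj : j = 0
        · rw [hτ, hj]
        · rw [if_neg hj] at hbad
          exact absurd hbad (Set.notMem_empty ω)

lemma measurable_hitTime (hmeas : ∀ n, Measurable (ξ n)) (A B : List S) :
    Measurable (hitTime A B ξ) := by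
  refine measurable_to_countable' fun j => ?_
  rw [hitTime_preimage]
  refine (measurableSet_EsetD hmeas A B j).union ?_
  split_ifs
  · exact (MeasurableSet.iUnion fun i => measurableSet_PsetD hmeas A B i).compl
  · exact MeasurableSet.empty

end HitTime

end PGFAux
namespace PGFAux

section Sequences

variable {S : Type*} [DecidableEq S]

/-- The coefficient sequence: `sseq p A B k` is the probability that the observed word ends
with `B` at time `k` (given for `k ≥ |B|` by `Pr(B)` and for `k < |B|` by a correlation term). -/
noncomputable def sseq (p : S → ℝ) (A B : List S) : ℕ → ℝ := fun k =>
  if k < B.length then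
    (if lastK A (B.length - k) = B.take (B.length - k)
     then patProb p (B.drop (B.length - k)) else 0)
  else patProb p B

lemma sseq_nonneg {p : S → ℝ} (hp : ∀ a, 0 < p a) (A B : List S) (k : ℕ) :
    0 ≤ sseq p A B k := by
  simp only [sseq]
  split_ifs
  exacts [patProb_nonneg hp _, le_refl 0, patProb_nonneg hp _]

lemma sseq_le_one {p : S → ℝ} (hp : ∀ a, 0 < p a) (hp1 : ∀ a, p a ≤ 1) (A B : List S) (k : ℕ) :
    sseq p A B k ≤ 1 := by
  simp only [sseq]
  split_ifs
  exacts [patProb_le_one hp hp1 _, zero_le_one, patProb_le_one hp hp1 _]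

lemma summable_aux {f : ℕ → ℝ} (h0 : ∀ n, 0 ≤ f n) (h1 : ∀ n, f n ≤ 1) {α : ℝ}
    (hα0 : 0 ≤ α) (hα1 : α < 1) : Summable fun n => f n * α ^ n :=
  Summable.of_nonneg_of_le (fun n => mul_nonneg (h0 n) (pow_nonneg hα0 n))
    (fun n => mul_le_of_le_one_left (pow_nonneg hα0 n) (h1 n))
    (summable_geometric_of_lt_one hα0 hα1)

lemma head_sum {p : S → ℝ} (hp : ∀ a, 0 < p a) {α : ℝ} (hα0 : 0 < α) (A B : List S) :
    ∑ k ∈ Finset.range B.length, sseq p A B k * α ^ k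
      = patProb p B * α ^ B.length * corr p A B α := by
  rw [corr]
  have hsub : Finset.Icc 1 (min A.length B.length) ⊆ Finset.Icc 1 B.length :=
    Finset.Icc_subset_Icc_right (min_le_right _ _)
  have hzero : ∀ k ∈ Finset.Icc 1 B.length, k ∉ Finset.Icc 1 (min A.length B.length) →
      (if lastK A k = B.take k then (1:ℝ) else 0) / (patProb p (B.take k) * α ^ k) = 0 := by
    intro k hk hk'
    simp only [Finset.mem_Icc] at hk hk'
    have hkl : A.length < k := by
      rcases Nat.lt_or_ge A.length k with h | h
      · exact h
      · exact absurd ⟨hk.1, by omega⟩ hk'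
    have hne : ¬ (lastK A k = B.take k) := by
      intro h
      have hlen := congrArg List.length h
      simp only [lastK, List.length_drop, List.length_take] at hlen
      omega
    rw [if_neg hne, zero_div]
  rw [Finset.sum_subset hsub hzero, Finset.mul_sum]
  refine Finset.sum_nbij' (fun t => B.length - t) (fun k => B.length - k) ?_ ?_ ?_ ?_ ?_
  · intro t ht; rw [Finset.mem_range] at ht; rw [Finset.mem_Icc]; omega
  · intro k hk; rw [Finset.mem_Icc] at hk; rw [Finset.mem_range]; omega
  · intro t ht; rw [Finset.mem_range] at ht; omega
  · intro k hk; rw [Finset.mem_Icc] at hk; omega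
  · intro t ht
    rw [Finset.mem_range] at ht
    simp only [sseq, if_pos ht]
    by_cases hind : lastK A (B.length - t) = B.take (B.length - t)
    · rw [if_pos hind, if_pos hind]
      have hPB : patProb p B
          = patProb p (B.take (B.length - t)) * patProb p (B.drop (B.length - t)) := by
        rw [← patProb_append, List.take_append_drop]
      have hpow : α ^ B.length = α ^ t * α ^ (B.length - t) := by
        rw [← pow_add]; congr 1; omega
      have h1 : patProb p (B.take (B.length - t)) ≠ 0 := (patProb_pos hp _).ne'
      have h2 : (α : ℝ) ^ (B.length - t) ≠ 0 := pow_ne_zero _ hα0.ne'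
      rw [hPB, hpow]
      field_simp
    · rw [if_neg hind, if_neg hind, zero_div, mul_zero, zero_mul]

lemma tsum_sseq {p : S → ℝ} (hp : ∀ a, 0 < p a) (hp1 : ∀ a, p a ≤ 1) {α : ℝ}
    (hα0 : 0 < α) (hα1 : α < 1) (A B : List S) :
    ∑' k, sseq p A B k * α ^ k
      = patProb p B * α ^ B.length * (corr p A B α + (1 - α)⁻¹) := by
  have hsum : Summable (fun k => sseq p A B k * α ^ k) :=
    summable_aux (sseq_nonneg hp A B) (sseq_le_one hp hp1 A B) hα0.le hα1
  rw [← Summable.sum_add_tsum_nat_add B.length hsum]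
  have htail : ∀ t : ℕ, sseq p A B (t + B.length) * α ^ (t + B.length)
      = (patProb p B * α ^ B.length) * α ^ t := by
    intro t
    simp only [sseq, if_neg (show ¬ t + B.length < B.length by omega)]
    rw [pow_add]; ring
  rw [tsum_congr htail, tsum_mul_left, tsum_geometric_of_lt_one hα0.le hα1,
    head_sum hp hα0 A B]
  ring

lemma corr_nonneg {p : S → ℝ} (hp : ∀ a, 0 < p a) {α : ℝ} (hα0 : 0 < α) (A B : List S) :
    0 ≤ corr p A B α := by
  refine Finset.sum_nonneg fun k _ => div_nonneg ?_ ?_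
  · split_ifs <;> norm_num
  · exact mul_nonneg (patProb_nonneg hp _) (pow_nonneg hα0.le _)

end Sequences

end PGFAux

set_option maxHeartbeats 1000000 in
open PGFAux in
/-- For every `0 < α < 1`, the probability generating function of `τ_{AB}` equals
`(1 + (1-α)(A∗B)(α)) / (1 + (1-α)(B∗B)(α))`. -/
theorem pgf_of_hitTime
    {S : Type*} [Fintype S] [DecidableEq S] [MeasurableSpace S] [MeasurableSingletonClass S]
    {Ω : Type*} [MeasurableSpace Ω] (μ : Measure Ω) [IsProbabilityMeasure μ]
    (p : S → ℝ) (hp : ∀ a, 0 < p a) (hpsum : ∑ a, p a = 1)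
    (ξ : ℕ → Ω → S) (hmeas : ∀ n, Measurable (ξ n))
    (hindep : iIndepFun ξ μ)
    (hdist : ∀ n a, μ {ω | ξ n ω = a} = ENNReal.ofReal (p a))
    (A B : List S) (hA : A ≠ []) (hB : B ≠ [])
    (hBA : ¬ B <:+: A.dropLast)
    (hfin : μ {ω | ∃ k, B <:+: obsWord A ξ k ω} = 1)
    (α : ℝ) (hα0 : 0 < α) (hα1 : α < 1) :
    (∫ ω, α ^ hitTime A B ξ ω ∂μ) =
      (1 + (1 - α) * corr p A B α) / (1 + (1 - α) * corr p B B α) := by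
  classical
  have hp1 : ∀ a, p a ≤ 1 := fun a =>
    hpsum ▸ Finset.single_le_sum (fun i _ => (hp i).le) (Finset.mem_univ a)
  have hβ : (0:ℝ) < 1 - α := by linarith
  -- measure identities
  have hμS : ∀ k, μ (SsetD A B ξ k) = ENNReal.ofReal (sseq p A B k) := by
    intro k
    rcases Nat.lt_or_ge k B.length with hk | hk
    · rw [meas_Sset_small hmeas hindep hdist hp hk]
      congr 1
      simp only [sseq, if_pos hk]
    · rw [meas_Sset_large hmeas hindep hdist hp hk]
      congr 1
      simp only [sseq, if_neg (show ¬ k < B.length by omega)]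
  have hμES : ∀ j t, μ (EsetD A B ξ j ∩ SsetD A B ξ (j + t))
      = μ (EsetD A B ξ j) * ENNReal.ofReal (sseq p B B t) := by
    intro j t
    rcases Nat.lt_or_ge t B.length with ht | ht
    · rw [meas_Eset_inter_Sset_small hmeas hindep hdist hp hBA ht j]
      congr 2
      simp only [sseq, if_pos ht]
    · rw [meas_Eset_inter_Sset_large hmeas hindep hdist hp ht j]
      congr 2
      simp only [sseq, if_neg (show ¬ t < B.length by omega)]
  -- convolution identity
  have hconv : ∀ k, sseq p A B k
      = ∑ j ∈ Finset.range (k+1), (μ (EsetD A B ξ j)).toReal * sseq p B B (k - j) := by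
    intro k
    have h1 : μ (SsetD A B ξ k)
        = ∑ j ∈ Finset.range (k+1), μ (EsetD A B ξ j ∩ SsetD A B ξ k) := by
      conv_lhs => rw [Sset_decomp A B ξ k]
      refine measure_biUnion_finset ?_ ?_
      · intro i _ j _ hij
        exact Disjoint.mono Set.inter_subset_left Set.inter_subset_left
          (EsetD_disjoint A B ξ hij)
      · exact fun j _ => (measurableSet_EsetD hmeas A B j).inter
          (measurableSet_SsetD hmeas A B k)
    have h2 : ∀ j ∈ Finset.range (k+1), μ (EsetD A B ξ j ∩ SsetD A B ξ k)
        = μ (EsetD A B ξ j) * ENNReal.ofReal (sseq p B B (k - j)) := by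
      intro j hj
      rw [Finset.mem_range] at hj
      calc μ (EsetD A B ξ j ∩ SsetD A B ξ k)
          = μ (EsetD A B ξ j ∩ SsetD A B ξ (j + (k - j))) := by
            rw [show j + (k - j) = k by omega]
        _ = _ := hμES j (k - j)
    have h3 := (hμS k).symm.trans (h1.trans (Finset.sum_congr rfl h2))
    have h4 := congrArg ENNReal.toReal h3
    rw [ENNReal.toReal_ofReal (sseq_nonneg hp _ _ _)] at h4
    rw [h4, ENNReal.toReal_sum
      (fun j _ => ENNReal.mul_ne_top (measure_ne_top μ _) ENNReal.ofReal_ne_top)]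
    exact Finset.sum_congr rfl fun j _ => by
      rw [ENNReal.toReal_mul, ENNReal.toReal_ofReal (sseq_nonneg hp _ _ _)]
  -- the integral as a power series in α
  have hEm : ∀ j, MeasurableSet (EsetD A B ξ j) := fun j => measurableSet_EsetD hmeas A B j
  have hEdisj : Pairwise (Function.onFun Disjoint (fun j => EsetD A B ξ j)) :=
    fun i j hij => EsetD_disjoint A B ξ hij
  have hUeq : {ω | ∃ k, B <:+: obsWord A ξ k ω} = ⋃ j, EsetD A B ξ j := by
    ext ω
    simp only [Set.mem_setOf_eq, Set.mem_iUnion]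
    constructor
    · rintro ⟨k, hk⟩
      have hk' : k ∈ {i | B <:+: obsWord A ξ i ω} := hk
      refine ⟨sInf {i | B <:+: obsWord A ξ i ω}, Nat.sInf_mem ⟨k, hk'⟩, fun i hi hPi => ?_⟩
      have := Nat.sInf_le (show i ∈ {k | B <:+: obsWord A ξ k ω} from hPi)
      omega
    · rintro ⟨j, hj⟩
      exact ⟨j, hj.1⟩
  have hNull : μ (⋃ j, EsetD A B ξ j)ᶜ = 0 := by
    rw [prob_compl_eq_zero_iff (MeasurableSet.iUnion hEm)]
    rw [← hUeq]
    exact hfin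
  have hτmeas : Measurable (hitTime A B ξ) := measurable_hitTime hmeas A B
  have hint : Integrable (fun ω => α ^ hitTime A B ξ ω) μ := by
    refine (integrable_const (1:ℝ)).mono'
      ((measurable_from_nat.comp hτmeas).aestronglyMeasurable) (ae_of_all μ fun ω => ?_)
    rw [Real.norm_eq_abs, abs_pow, abs_of_pos hα0]
    exact pow_le_one₀ hα0.le hα1.le
  have hrestrict : μ.restrict (⋃ j, EsetD A B ξ j) = μ := by
    conv_rhs => rw [← Measure.restrict_univ (μ := μ)]
    exact Measure.restrict_congr_set (MeasureTheory.ae_eq_univ.mpr hNull)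
  have hF : (∫ ω, α ^ hitTime A B ξ ω ∂μ)
      = ∑' j, (μ (EsetD A B ξ j)).toReal * α ^ j := by
    have h0 : (∫ ω, α ^ hitTime A B ξ ω ∂μ)
        = ∫ ω in (⋃ j, EsetD A B ξ j), α ^ hitTime A B ξ ω ∂μ := by
      rw [hrestrict]
    rw [h0, integral_iUnion hEm hEdisj hint.integrableOn]
    refine tsum_congr fun j => ?_
    rw [setIntegral_congr_fun (g := fun _ => α ^ j) (hEm j)
      (fun ω hω => by rw [hitTime_eq_of_mem hω]), setIntegral_const, smul_eq_mul,
      measureReal_def, mul_comm]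
  -- summabilities
  have hu_nn : ∀ j, 0 ≤ (μ (EsetD A B ξ j)).toReal := fun j => ENNReal.toReal_nonneg
  have hu_le : ∀ j, (μ (EsetD A B ξ j)).toReal ≤ 1 := fun j =>
    ENNReal.toReal_le_of_le_ofReal zero_le_one (by simpa using prob_le_one)
  have hSu : Summable (fun j => (μ (EsetD A B ξ j)).toReal * α ^ j) :=
    summable_aux hu_nn hu_le hα0.le hα1
  have hSc : Summable (fun t => sseq p B B t * α ^ t) :=
    summable_aux (sseq_nonneg hp B B) (sseq_le_one hp hp1 B B) hα0.le hα1
  -- Cauchy product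
  have hcauchy : (∑' j, (μ (EsetD A B ξ j)).toReal * α ^ j) * (∑' t, sseq p B B t * α ^ t)
      = ∑' k, sseq p A B k * α ^ k := by
    rw [tsum_mul_tsum_eq_tsum_sum_antidiagonal_of_summable_norm
      (summable_norm_iff.mpr hSu) (summable_norm_iff.mpr hSc)]
    refine tsum_congr fun k => ?_
    rw [Finset.Nat.sum_antidiagonal_eq_sum_range_succ
      (fun i j => ((μ (EsetD A B ξ i)).toReal * α ^ i) * (sseq p B B j * α ^ j))]
    rw [hconv k, Finset.sum_mul]
    refine Finset.sum_congr rfl fun j hj => ?_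
    rw [Finset.mem_range] at hj
    have hpow : α ^ j * α ^ (k - j) = α ^ k := by
      rw [← pow_add]; congr 1; omega
    rw [← hpow]; ring
  -- closed forms
  have hcc : ∑' t, sseq p B B t * α ^ t
      = patProb p B * α ^ B.length * (corr p B B α + (1 - α)⁻¹) :=
    tsum_sseq hp hp1 hα0 hα1 B B
  have hss : ∑' k, sseq p A B k * α ^ k
      = patProb p B * α ^ B.length * (corr p A B α + (1 - α)⁻¹) :=
    tsum_sseq hp hp1 hα0 hα1 A B
  have hPB : 0 < patProb p B := patProb_pos hp B
  have hαm : 0 < α ^ B.length := pow_pos hα0 _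
  have hY : 0 ≤ corr p B B α := corr_nonneg hp hα0 B B
  have hD : 0 < patProb p B * α ^ B.length * (corr p B B α + (1 - α)⁻¹) :=
    mul_pos (mul_pos hPB hαm) (add_pos_of_nonneg_of_pos hY (inv_pos.mpr hβ))
  have hkey : (∑' j, (μ (EsetD A B ξ j)).toReal * α ^ j)
      = (∑' k, sseq p A B k * α ^ k) / (∑' t, sseq p B B t * α ^ t) := by
    rw [eq_div_iff (by rw [hcc]; exact hD.ne'), hcauchy]
  rw [hF, hkey, hcc, hss]
  have hden2 : 0 < 1 + (1 - α) * corr p B B α :=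
    add_pos_of_pos_of_nonneg one_pos (mul_nonneg hβ.le hY)
  rw [div_eq_div_iff hD.ne' hden2.ne']
  field_simp
  ring
end

section
/- Let R be a commutative ring, M an m×m matrix over R, and t ∈ R. Let 𝒜 be the (m+1)×(m+1) matrix whose (0,0) entry is t, whose remaining first-row entries are all 1, whose remaining first-column entries are all −1, and whose lower-right m×m block is M. Then det 𝒜 = t·det M + Σ_{j=1}^m det M^j, where M^j denotes M with its j-th column replaced by the all-ones column. -/
open Matrix Finset

/-- The `(m+1) × (m+1)` matrix with `(0,0)` entry `t`, remaining first-row entries `1`,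
remaining first-column entries `-1`, and lower-right `m × m` block `M`. -/
def borderedMatrix {R : Type*} [CommRing R] {m : ℕ} (t : R) (M : Matrix (Fin m) (Fin m) R) :
    Matrix (Fin (m + 1)) (Fin (m + 1)) R :=
  Matrix.of fun i j =>
    Fin.cases (Fin.cases t (fun _ => (1 : R)) j)
      (fun i' => Fin.cases (-1 : R) (fun j' => M i' j') j) i

/-- `det 𝒜 = t·det M + ∑_{j=1}^m det M^j`, where `M^j` is `M` with its `j`-th column
replaced by the all-ones column. -/
theorem det_borderedMatrix {R : Type*} [CommRing R] {m : ℕ} (t : R)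
    (M : Matrix (Fin m) (Fin m) R) :
    (borderedMatrix t M).det =
      t * M.det + ∑ j : Fin m, (M.updateCol j fun _ => (1 : R)).det := by
  cases m with
  | zero =>
      simp [Matrix.det_fin_one, borderedMatrix, Matrix.det_fin_zero]
  | succ n =>
      rw [Matrix.det_succ_row_zero, Fin.sum_univ_succ]
      congr 1
      · -- the `t · det M` term
        have h0 : (borderedMatrix t M).submatrix Fin.succ ((0 : Fin (n + 2)).succAbove)
            = M := by
          ext i k
          simp [borderedMatrix, Fin.succAbove_zero]
        rw [h0]
        simp [borderedMatrix]
      · refine Finset.sum_congr rfl fun j _ => ?_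
        -- expand the `j`-th minor along its first column
        have hB : ((borderedMatrix t M).submatrix Fin.succ (Fin.succAbove j.succ)).det
            = ∑ i : Fin (n + 1),
              (-1 : R) ^ (i : ℕ) * (-1) * (M.submatrix i.succAbove j.succAbove).det := by
          rw [Matrix.det_succ_column_zero]
          refine Finset.sum_congr rfl fun i _ => ?_
          have e1 : ((borderedMatrix t M).submatrix Fin.succ (Fin.succAbove j.succ)) i 0
              = (-1 : R) := by
            simp [borderedMatrix, Fin.succ_succAbove_zero]
          have e2 : ((borderedMatrix t M).submatrix Fin.succ
                (Fin.succAbove j.succ)).submatrix i.succAbove Fin.succ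
              = M.submatrix i.succAbove j.succAbove := by
            ext p q
            simp [borderedMatrix, Fin.succ_succAbove_succ]
          rw [e1, e2]
        -- expand `M.updateCol j 1` along column `j`
        have hN : (M.updateCol j fun _ => (1 : R)).det
            = ∑ i : Fin (n + 1),
              (-1 : R) ^ ((i : ℕ) + (j : ℕ)) * (M.submatrix i.succAbove j.succAbove).det := by
          rw [Matrix.det_succ_column (M.updateCol j fun _ => (1 : R)) j]
          refine Finset.sum_congr rfl fun i _ => ?_
          have e1 : (M.updateCol j fun _ => (1 : R)) i j = 1 := by simp
          have e2 : (M.updateCol j fun _ => (1 : R)).submatrix i.succAbove j.succAbove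
              = M.submatrix i.succAbove j.succAbove := by
            ext p q
            simp [Matrix.updateCol_apply, Fin.succAbove_ne]
          rw [e1, e2]
          ring
        have hA : (borderedMatrix t M) 0 j.succ = 1 := rfl
        rw [hA, hB, hN, Finset.mul_sum]
        refine Finset.sum_congr rfl fun i _ => ?_
        have : ((j.succ : Fin (n + 2)) : ℕ) = (j : ℕ) + 1 := rfl
        rw [this]
        have hpow : (-1 : R) ^ ((j : ℕ) + 1) * ((-1 : R) ^ (i : ℕ) * (-1))
            = (-1 : R) ^ ((i : ℕ) + (j : ℕ)) := by
          rw [pow_succ, pow_add]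
          ring
        calc (-1 : R) ^ ((j : ℕ) + 1) * 1 *
              ((-1 : R) ^ (i : ℕ) * (-1) * (M.submatrix i.succAbove j.succAbove).det)
            = ((-1 : R) ^ ((j : ℕ) + 1) * ((-1 : R) ^ (i : ℕ) * (-1))) *
              (M.submatrix i.succAbove j.succAbove).det := by ring
          _ = (-1 : R) ^ ((i : ℕ) + (j : ℕ)) * (M.submatrix i.succAbove j.succAbove).det := by
              rw [hpow]
end

section
/- Let R be a commutative ring, M an m×m matrix over R, t ∈ R, and v ∈ R^m. Let 𝒜 be the (m+1)×(m+1) matrix whose (0,0) entry is t, whose remaining first-row entries are all 1, whose remaining first-column entries are all −1, and whose lower-right m×m block is M; and let 𝒜_1 be 𝒜 with its first (0-th) column replaced by the column (1, v_1, …, v_m). Then det 𝒜_1 = det M − Σ_{k=1}^m det M_k, where M_k denotes M with its k-th column replaced by v. -/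
open Matrix Finset

/-- `det 𝒜₁ = det M − ∑_{k=1}^m det M_k`, where `𝒜₁` is the bordered matrix `𝒜` with its
`0`-th column replaced by `(1, v₁, …, v_m)`, and `M_k` is `M` with its `k`-th column
replaced by `v`. -/
theorem det_borderedMatrix_updateFirstColumn {R : Type*} [CommRing R] {m : ℕ} (t : R)
    (M : Matrix (Fin m) (Fin m) R) (v : Fin m → R) :
    ((borderedMatrix t M).updateCol 0 (Fin.cons (1 : R) v)).det =
      M.det - ∑ k : Fin m, (M.updateCol k v).det := by
  set A := (borderedMatrix t M).updateCol 0 (Fin.cons (1 : R) v) with hA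
  have hA00 : A 0 0 = 1 := by simp [hA, updateCol_apply]
  have hA0s : ∀ j : Fin m, A 0 j.succ = 1 := by
    intro j
    simp [hA, updateCol_apply, borderedMatrix, Fin.succ_ne_zero]
  have hAs0 : ∀ i : Fin m, A i.succ 0 = v i := by
    intro i
    simp [hA, updateCol_apply]
  have hAss : ∀ i j : Fin m, A i.succ j.succ = M i j := by
    intro i j
    simp [hA, updateCol_apply, borderedMatrix, Fin.succ_ne_zero]
  rw [det_succ_row_zero, Fin.sum_univ_succ]
  have h0 : A.submatrix Fin.succ (Fin.succAbove 0) = M := by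
    ext i j
    simpa [Fin.succAbove] using hAss i j
  have hk : ∀ k : Fin m,
      (-1 : R) ^ ((k.succ : Fin (m + 1)) : ℕ) * A 0 k.succ *
        (A.submatrix Fin.succ k.succ.succAbove).det = -(M.updateCol k v).det := by
    intro k
    have hsub : A.submatrix Fin.succ k.succ.succAbove =
        (M.updateCol k v).submatrix id ((k.cycleRange)⁻¹ : Equiv.Perm (Fin m)) := by
      ext i j
      obtain ⟨j'', rfl⟩ : ∃ j'', j = k.cycleRange j'' := ⟨k.cycleRange⁻¹ j, by simp⟩
      simp only [submatrix_apply, id_eq, Equiv.Perm.coe_inv, Equiv.symm_apply_apply]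
      rw [Fin.succAbove_cycleRange]
      rcases eq_or_ne j'' k with rfl | hne
      · rw [Equiv.swap_apply_right]
        simp [hAs0 i, Matrix.updateCol_self]
      · rw [Equiv.swap_apply_of_ne_of_ne (Fin.succ_ne_zero j'')
          (by simpa using hne)]
        rw [hAss i j'', Matrix.updateCol_ne hne]
    rw [hsub, Matrix.det_permute', map_inv, Fin.sign_cycleRange, hA0s k, Fin.val_succ]
    have hs : ((((((-1 : ℤˣ) ^ (k : ℕ))⁻¹ : ℤˣ) : ℤ) : R)) = (-1) ^ (k : ℕ) := by
      simp
    rw [hs, mul_one, ← mul_assoc, ← pow_add,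
      Odd.neg_one_pow ⟨(k : ℕ), by ring⟩, neg_one_mul]
  rw [h0, hA00, Finset.sum_congr rfl fun k _ => hk k]
  simp [sub_eq_add_neg]
end

section
/- Let R be a commutative ring, M an m×m matrix over R, t ∈ R, and v ∈ R^m. Let 𝒜 be the (m+1)×(m+1) matrix whose (0,0) entry is t, whose remaining first-row entries are all 1, whose remaining first-column entries are all −1, and whose lower-right m×m block is M. For 1 ≤ k ≤ m, let 𝒜_{1+k} be 𝒜 with its (1+k)-th column replaced by the column (1, v_1, …, v_m). Then det 𝒜_{1+k} = t·det M_k + Σ_{j=1}^m det M_k^j, where M_k denotes M with its k-th column replaced by v, and M_k^j denotes M_k with its j-th column replaced by the all-ones column. -/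
open Matrix Finset

/-- For `1 ≤ k ≤ m`, `det 𝒜_{1+k} = t·det M_k + ∑_{j=1}^m det M_k^j`, where `𝒜_{1+k}` is the
bordered matrix `𝒜` with its `(1+k)`-th column replaced by `(1, v₁, …, v_m)`, `M_k` is `M`
with its `k`-th column replaced by `v`, and `M_k^j` is `M_k` with its `j`-th column replaced
by the all-ones column. -/
theorem det_borderedMatrix_updateLaterColumn {R : Type*} [CommRing R] {m : ℕ} (t : R)
    (M : Matrix (Fin m) (Fin m) R) (v : Fin m → R) (k : Fin m) :
    ((borderedMatrix t M).updateCol k.succ (Fin.cons (1 : R) v)).det =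
      t * (M.updateCol k v).det +
        ∑ j : Fin m, ((M.updateCol k v).updateCol j fun _ => (1 : R)).det := by
  obtain ⟨m, rfl⟩ : ∃ n, m = n + 1 := ⟨m - 1, by have := k.pos; omega⟩
  set B := (borderedMatrix t M).updateCol k.succ (Fin.cons (1 : R) v) with hB
  set Mk := M.updateCol k v with hMk
  rw [Matrix.det_succ_row_zero, Fin.sum_univ_succ]
  have hB00 : B 0 0 = t := by
    simp [hB, borderedMatrix, Matrix.updateCol_apply, (Fin.succ_ne_zero k).symm]
  have hminor0 : B.submatrix Fin.succ (Fin.succAbove 0) = Mk := by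
    ext i j
    simp only [Matrix.submatrix_apply, Fin.succAbove_zero, hB, hMk,
      Matrix.updateCol_apply, Fin.succ_inj, borderedMatrix, Matrix.of_apply,
      Fin.cases_succ, Fin.cons_succ]
  have hterm : ∀ j : Fin (m + 1),
      (-1 : R) ^ ((j.succ : Fin (m+1+1)) : ℕ) * B 0 j.succ *
        (B.submatrix Fin.succ (Fin.succAbove j.succ)).det =
      ((Mk.updateCol j fun _ => (1 : R))).det := by
    intro j
    have hB0 : B 0 j.succ = 1 := by
      by_cases h : j = k
      · subst h; simp [hB, Matrix.updateCol_apply]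
      · simp [hB, Matrix.updateCol_apply, fun hh => h (Fin.succ_inj.mp hh),
          borderedMatrix]
    have hminor : B.submatrix Fin.succ (Fin.succAbove j.succ) =
        (Mk.updateCol j fun _ => (-1 : R)).submatrix id (Fin.cycleRange j).symm := by
      ext i c
      induction c using Fin.cases with
      | zero =>
        simp [hB, hMk, Fin.cycleRange_symm_zero, Matrix.updateCol_apply,
          (Fin.succ_ne_zero k).symm, borderedMatrix]
      | succ c' =>
        have hne : j.succAbove c' ≠ j := Fin.succAbove_ne j c'
        simp only [Matrix.submatrix_apply, id_eq, Fin.cycleRange_symm_succ,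
          Fin.succ_succAbove_succ, hB, hMk, Matrix.updateCol_apply, Fin.succ_inj,
          hne, if_false, borderedMatrix, Matrix.of_apply, Fin.cases_succ]
        split <;> simp

    have hones : (fun _ : Fin (m + 1) => (-1 : R)) = (-1 : R) • (fun _ => (1 : R)) := by
      funext x; simp
    rw [hB0, hminor, Matrix.det_permute', hones, Matrix.det_updateCol_smul]
    have hsign : (Equiv.Perm.sign (Fin.cycleRange j).symm : R) = (-1 : R) ^ (j : ℕ) := by
      rw [Equiv.Perm.sign_symm, Fin.sign_cycleRange]
      simp
    rw [hsign]
    have hcast : ((j.succ : Fin (m+1+1)) : ℕ) = (j : ℕ) + 1 := Fin.val_succ j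
    rw [hcast, pow_succ]
    ring_nf
    rw [pow_mul', neg_one_sq, one_pow, mul_one]
  rw [hB00, hminor0]
  simp only [hterm]
  rw [Fin.val_zero, pow_zero, one_mul]
end

section
/- For every 0 < α < 1 such that (1−α)·det 𝓑(α) + Σ_{j=1}^m det 𝓑^j(α) ≠ 0, one has Q_τ(α) = (det 𝓑(α) − Σ_{k=1}^m det 𝓑_k(α)) / ((1−α)·det 𝓑(α) + Σ_{j=1}^m det 𝓑^j(α)). -/
open MeasureTheory ProbabilityTheory Finset

/-- The stopping time `τ_{A𝔅} = min_{1 ≤ i ≤ m} τ_{AB_i}`. -/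
noncomputable def hitTimeMin {S : Type*} {Ω : Type*} {m : ℕ} (A : List S) (Bs : Fin m → List S)
    (ξ : ℕ → Ω → S) (ω : Ω) : ℕ :=
  ⨅ i : Fin m, hitTime A (Bs i) ξ ω

/-- The generating function `g_τ^j(α) = E(α^τ · 1_{{τ = τ_j}})`. -/
noncomputable def gGF {S : Type*} {Ω : Type*} [MeasurableSpace Ω] (μ : Measure Ω) {m : ℕ}
    (A : List S) (Bs : Fin m → List S) (ξ : ℕ → Ω → S) (j : Fin m) (α : ℝ) : ℝ :=
  ∫ ω, (if hitTimeMin A Bs ξ ω = hitTime A (Bs j) ξ ω then α ^ hitTimeMin A Bs ξ ω else 0) ∂μ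

/-- The generating function `Q_τ(α) = (1 - E(α^τ))/(1-α)`. -/
noncomputable def QGF {S : Type*} {Ω : Type*} [MeasurableSpace Ω] (μ : Measure Ω) {m : ℕ}
    (A : List S) (Bs : Fin m → List S) (ξ : ℕ → Ω → S) (α : ℝ) : ℝ :=
  (1 - ∫ ω, α ^ hitTimeMin A Bs ξ ω ∂μ) / (1 - α)


/-- The matrix `𝓑(α) = ((B_j∗B_i)(α))_{1≤i,j≤m}`. -/
noncomputable def corrMat {S : Type*} [DecidableEq S] (p : S → ℝ) {m : ℕ}
    (Bs : Fin m → List S) (α : ℝ) : Matrix (Fin m) (Fin m) ℝ :=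
  Matrix.of fun i j => corr p (Bs j) (Bs i) α

/-- The column vector `((A∗B_i)(α))_{1≤i≤m}`. -/
noncomputable def corrCol {S : Type*} [DecidableEq S] (p : S → ℝ) (A : List S) {m : ℕ}
    (Bs : Fin m → List S) (α : ℝ) : Fin m → ℝ :=
  fun i => corr p A (Bs i) α



set_option linter.unusedSectionVars false
set_option linter.unusedVariables false
set_option maxHeartbeats 1000000

open Filter
open scoped ENNReal NNReal

/-! ### List lemmas -/
section ListLemmas
variable {α : Type*}

lemma infix_concat_cases {t w : List α} {x : α} (h : t <:+: w ++ [x]) :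
    t <:+: w ∨ t <:+ w ++ [x] := by
  obtain ⟨s, u, hsu⟩ := h
  rcases (List.eq_nil_or_concat' u) with rfl | ⟨u', y, rfl⟩
  · right; exact ⟨s, by simpa using hsu⟩
  · left
    have h1 : (s ++ t ++ u') ++ [y] = w ++ [x] := by
      simpa [List.append_assoc] using hsu
    have h2 := List.append_inj' h1 (by simp)
    exact ⟨s, u', by simpa [List.append_assoc] using h2.1⟩

lemma lastK_zero (C : List α) : lastK C 0 = [] := by simp [lastK]

lemma lastK_suffix (C : List α) (k : ℕ) : lastK C k <:+ C := List.drop_suffix _ _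

lemma lastK_length (C : List α) (k : ℕ) : (lastK C k).length = min k C.length := by
  simp [lastK]; omega

lemma lastK_of_suffix {u w : List α} (h : u <:+ w) {k : ℕ} (hk : k ≤ u.length) :
    lastK w k = lastK u k := by
  obtain ⟨s, rfl⟩ := h
  have : s.length + u.length - k = s.length + (u.length - k) := by omega
  simp [lastK, this, List.drop_append]

lemma lastK_self (C : List α) : lastK C C.length = C := by simp [lastK]

lemma suffix_lastK {u w : List α} (h : u <:+ w) : lastK w u.length = u := by
  rw [lastK_of_suffix h le_rfl, lastK_self]

lemma lastK_concat {w : List α} {x : α} {k : ℕ} (hk : 1 ≤ k) (hkw : k ≤ w.length + 1) :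
    lastK (w ++ [x]) k = lastK w (k-1) ++ [x] := by
  have h1 : (w ++ [x]).length - k = w.length - (k-1) := by simp; omega
  have h2 : w.length - (k-1) ≤ w.length := by omega
  rw [lastK, h1, lastK, List.drop_append]
  congr 1
  have : w.length - (k - 1) - w.length = 0 := by omega
  simp [this]

lemma lastK_concat_take {w B : List α} {x : α} {k : ℕ} (hk : 1 ≤ k) (hkB : k ≤ B.length) :
    lastK (w ++ [x]) k = B.take k ↔
      (lastK w (k-1) = B.take (k-1) ∧ x = B.get ⟨k-1, by omega⟩) := by
  by_cases hkw : k ≤ w.length + 1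
  · rw [lastK_concat hk hkw]
    have htake : B.take k = B.take (k-1) ++ [B.get ⟨k-1, by omega⟩] := by
      have h3 := List.take_concat_get (l := B) (i := k-1) (by omega)
      have hk1 : k - 1 + 1 = k := by omega
      rw [hk1] at h3
      rw [← h3]; simp [List.concat_eq_append]
    rw [htake]
    constructor
    · intro h
      have h2 := List.append_inj' h (by simp)
      exact ⟨h2.1, by simpa using h2.2⟩
    · rintro ⟨h1, h2⟩; rw [h1, h2]
  · constructor
    · intro h
      exfalso
      have := congrArg List.length h
      rw [lastK_length] at this
      simp at this
      omega
    · rintro ⟨h1, -⟩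
      exfalso
      have := congrArg List.length h1
      rw [lastK_length] at this
      simp at this
      omega

end ListLemmas

/-! ### Observed-word lemmas -/
section Obs
variable {S Ω : Type*} (A : List S) (ξ : ℕ → Ω → S)

lemma obsWord_zero (ω : Ω) : obsWord A ξ 0 ω = A := by simp [obsWord]

lemma obsWord_succ (n : ℕ) (ω : Ω) :
    obsWord A ξ (n+1) ω = obsWord A ξ n ω ++ [ξ n ω] := by
  rw [obsWord, obsWord, List.ofFn_succ']
  simp [List.concat_eq_append]

lemma obsWord_length (n : ℕ) (ω : Ω) : (obsWord A ξ n ω).length = A.length + n := by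
  simp [obsWord]

lemma infix_obsWord_mono {B : List S} {n n' : ℕ} (h : n ≤ n') {ω : Ω}
    (hB : B <:+: obsWord A ξ n ω) : B <:+: obsWord A ξ n' ω := by
  induction n' with
  | zero => simpa [Nat.le_zero.mp h] using hB
  | succ k ih =>
    rcases Nat.lt_or_ge n (k+1) with h' | h'
    · have := ih (by omega)
      rw [obsWord_succ]
      exact this.trans (List.prefix_append _ _).isInfix
    · have : n = k + 1 := by omega
      subst this; exact hB

lemma suffix_of_new_infix {B : List S} {n : ℕ} {ω : Ω}
    (h1 : ¬ B <:+: obsWord A ξ n ω) (h2 : B <:+: obsWord A ξ (n+1) ω) :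
    B <:+ obsWord A ξ (n+1) ω := by
  rw [obsWord_succ] at h2 ⊢
  rcases infix_concat_cases h2 with h | h
  · exact absurd h h1
  · exact h

lemma suffix_of_infix_A {B : List S} (hA : A ≠ []) (hBA : ¬ B <:+: A.dropLast)
    (h : B <:+: A) : B <:+ A := by
  have hd := List.dropLast_append_getLast hA
  rw [← hd] at h ⊢
  rcases infix_concat_cases h with h' | h'
  · exact absurd h' hBA
  · exact h'

end Obs

section Prob
variable {S : Type*} [Fintype S] [MeasurableSpace S] [MeasurableSingletonClass S]
variable {Ω : Type*} [MeasurableSpace Ω] {μ : Measure Ω}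

lemma pi_allMeas {n : ℕ} (U : Set (Fin n → S)) : MeasurableSet U := by
  have hsing : ∀ f : Fin n → S, MeasurableSet ({f} : Set (Fin n → S)) := by
    intro f
    have : ({f} : Set (Fin n → S)) = ⋂ i, (fun v : Fin n → S => v i) ⁻¹' {f i} := by
      ext g; simp [funext_iff]
    rw [this]
    exact MeasurableSet.iInter fun i => (measurable_pi_apply i) (measurableSet_singleton _)
  have : U = ⋃ f ∈ (Set.toFinite U).toFinset, ({f} : Set (Fin n → S)) := by
    ext g; simp
  rw [this]
  exact (Set.toFinite U).toFinset.measurableSet_biUnion (fun f _ => hsing f)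

def tupX {S Ω : Type*} (ξ : ℕ → Ω → S) (n : ℕ) : Ω → (Fin n → S) := fun ω i => ξ i ω

variable {ξ : ℕ → Ω → S} {p : S → ℝ}

lemma measurable_tupX (hmeas : ∀ n, Measurable (ξ n)) (n : ℕ) : Measurable (tupX ξ n) :=
  measurable_pi_lambda _ fun i => hmeas i

lemma cyl_step (hmeas : ∀ n, Measurable (ξ n))
    (hindep : iIndepFun ξ μ)
    (hdist : ∀ n a, μ {ω | ξ n ω = a} = ENNReal.ofReal (p a))
    (n : ℕ) (U : Set (Fin n → S)) (b : S) :
    μ (tupX ξ n ⁻¹' U ∩ ξ n ⁻¹' {b}) = μ (tupX ξ n ⁻¹' U) * ENNReal.ofReal (p b) := by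
  have hd : Disjoint (Finset.range n) ({n} : Finset ℕ) := by simp
  have hI := hindep.indepFun_finset (Finset.range n) {n} hd hmeas
  set φ : (((Finset.range n) : Finset ℕ) → S) → (Fin n → S) :=
    fun v i => v ⟨(i : ℕ), Finset.mem_range.mpr i.isLt⟩ with hφdef
  set ψ : ((({n} : Finset ℕ)) → S) → S := fun v => v ⟨n, Finset.mem_singleton_self n⟩ with hψdef
  have hφ : Measurable φ := measurable_pi_lambda _ fun i => measurable_pi_apply _
  have hψ : Measurable ψ := measurable_pi_apply _
  have hI2 := hI.comp hφ hψ
  have e1 : φ ∘ (fun a (i : ((Finset.range n) : Finset ℕ)) => ξ i a) = tupX ξ n := rfl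
  have e2 : ψ ∘ (fun a (i : (({n} : Finset ℕ))) => ξ i a) = ξ n := rfl
  rw [e1, e2] at hI2
  rw [hI2.measure_inter_preimage_eq_mul U {b} (pi_allMeas U) (measurableSet_singleton b)]
  congr 1
  rw [← hdist n b]
  rfl

def blockEv {S Ω : Type*} (ξ : ℕ → Ω → S) (n : ℕ) (w : List S) : Set Ω :=
  {ω | (List.ofFn fun i : Fin w.length => ξ (n + i) ω) = w}

lemma blockEv_nil (n : ℕ) : blockEv ξ n ([] : List S) = Set.univ := by
  ext ω; simp [blockEv]

lemma blockEv_cons (n : ℕ) (b : S) (w : List S) :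
    blockEv ξ n (b :: w) = (ξ n ⁻¹' {b}) ∩ blockEv ξ (n+1) w := by
  have key : ∀ ω : Ω, (List.ofFn fun i : Fin w.length => ξ (n + ((i.succ : Fin (w.length+1)) : ℕ)) ω)
      = (List.ofFn fun i : Fin w.length => ξ (n + 1 + (i : ℕ)) ω) := by
    intro ω
    congr 1
    funext i
    have h : n + ((Fin.succ i : Fin (w.length+1)) : ℕ) = n + 1 + (i : ℕ) := by
      simp only [Fin.val_succ]; omega
    rw [h]
  ext ω
  simp only [blockEv, Set.mem_setOf_eq, List.length_cons, List.ofFn_succ, Set.mem_inter_iff,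
    Set.mem_preimage, Set.mem_singleton_iff, List.cons_eq_cons]
  rw [key ω]
  simp

lemma cyl_block (hmeas : ∀ n, Measurable (ξ n))
    (hindep : iIndepFun ξ μ)
    (hdist : ∀ n a, μ {ω | ξ n ω = a} = ENNReal.ofReal (p a))
    (hp : ∀ a, 0 < p a) :
    ∀ (w : List S) (n : ℕ) (U : Set (Fin n → S)),
    μ (tupX ξ n ⁻¹' U ∩ blockEv ξ n w) =
      μ (tupX ξ n ⁻¹' U) * ENNReal.ofReal (patProb p w) := by
  intro w
  induction w with
  | nil => intro n U; simp [blockEv_nil, patProb]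
  | cons b w ih =>
    intro n U
    rw [blockEv_cons]
    set U' : Set (Fin (n+1) → S) :=
      {v | (fun i : Fin n => v i.castSucc) ∈ U ∧ v (Fin.last n) = b} with hU'
    have hset : tupX ξ n ⁻¹' U ∩ ξ n ⁻¹' {b} = tupX ξ (n+1) ⁻¹' U' := by
      ext ω
      simp only [Set.mem_inter_iff, Set.mem_preimage, Set.mem_singleton_iff, hU',
        Set.mem_setOf_eq, tupX]
      constructor
      · rintro ⟨h1, h2⟩
        exact ⟨h1, by simpa using h2⟩
      · rintro ⟨h1, h2⟩
        exact ⟨h1, by simpa using h2⟩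
    rw [← Set.inter_assoc, hset, ih (n+1) U', ← hset,
      cyl_step hmeas hindep hdist n U b]
    have : patProb p (b :: w) = p b * patProb p w := by simp [patProb]
    rw [this, ENNReal.ofReal_mul (le_of_lt (hp b))]
    ring

end Prob
section Prob2
variable {S : Type*} [Fintype S] [MeasurableSpace S] [MeasurableSingletonClass S]
variable {Ω : Type*} [MeasurableSpace Ω] {μ : Measure Ω}
variable {ξ : ℕ → Ω → S} {p : S → ℝ}

lemma patProb_pos (hp : ∀ a, 0 < p a) (w : List S) : 0 < patProb p w := by
  induction w with
  | nil => simp [patProb]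
  | cons b w ih => simpa [patProb] using mul_pos (hp b) (by simpa [patProb] using ih)

lemma patProb_le_one [Fintype S] (hp : ∀ a, 0 < p a) (hpsum : ∑ a, p a = 1) (w : List S) :
    patProb p w ≤ 1 := by
  have hple : ∀ a, p a ≤ 1 := by
    intro a
    rw [← hpsum]
    exact Finset.single_le_sum (f := p) (fun b _ => (hp b).le) (Finset.mem_univ a)
  induction w with
  | nil => simp [patProb]
  | cons b w ih =>
    have : patProb p (b :: w) = p b * patProb p w := by simp [patProb]
    rw [this]
    calc p b * patProb p w ≤ 1 * 1 :=
      mul_le_mul (hple b) ih (patProb_pos hp w).le zero_le_one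
    _ = 1 := by ring

lemma measurable_blockEv (hmeas : ∀ n, Measurable (ξ n)) (n : ℕ) (w : List S) :
    MeasurableSet (blockEv ξ n w) := by
  have : blockEv ξ n w =
      (fun ω => (fun i : Fin w.length => ξ (n + i) ω)) ⁻¹' {v | List.ofFn v = w} := rfl
  rw [this]
  exact (measurable_pi_lambda _ fun i => hmeas _) (pi_allMeas _)

lemma blockEv_infix_obsWord {A : List S} {B : List S} {t : ℕ} {ω : Ω}
    (h : ω ∈ blockEv ξ (t * B.length) B) :
    B <:+: obsWord A ξ (t * B.length + B.length) ω := by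
  have hofn : (List.ofFn fun i : Fin (t * B.length + B.length) => ξ i ω) =
      (List.ofFn fun i : Fin (t * B.length) => ξ i ω) ++
        (List.ofFn fun j : Fin B.length => ξ (t * B.length + j) ω) := by
    rw [List.ofFn_add]
    congr 1
  have hB : (List.ofFn fun j : Fin B.length => ξ (t * B.length + j) ω) = B := h
  rw [obsWord, hofn, hB]
  exact ⟨A ++ List.ofFn fun i : Fin (t * B.length) => ξ i ω, [], by simp⟩

/-- The block-avoiding set up to `T`. -/
def avoidSet (ξ : ℕ → Ω → S) (B : List S) (T : ℕ) : Set Ω :=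
  ⋂ t ∈ Finset.range T, (blockEv ξ (t * B.length) B)ᶜ

lemma avoidSet_preimage (ξ : ℕ → Ω → S) (B : List S) (T : ℕ) :
    avoidSet ξ B T = tupX ξ (T * B.length) ⁻¹'
      {v : Fin (T * B.length) → S | ∀ t, ∀ ht : t < T,
        (List.ofFn fun j : Fin B.length =>
          v ⟨t * B.length + j, by
            have h1 : t * B.length + (j : ℕ) < t * B.length + B.length := by omega
            have h2 : t * B.length + B.length ≤ T * B.length := by
              rw [← Nat.succ_mul]
              exact Nat.mul_le_mul_right _ ht
            omega⟩) ≠ B} := by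
  ext ω
  simp only [avoidSet, Set.mem_iInter, Finset.mem_range, Set.mem_compl_iff, Set.mem_preimage,
    Set.mem_setOf_eq, blockEv, tupX]

lemma measure_avoidSet (hmeas : ∀ n, Measurable (ξ n))
    (hindep : iIndepFun ξ μ)
    (hdist : ∀ n a, μ {ω | ξ n ω = a} = ENNReal.ofReal (p a))
    (hp : ∀ a, 0 < p a) [IsProbabilityMeasure μ] (B : List S) (T : ℕ) :
    (μ (avoidSet ξ B T)).toReal = (1 - patProb p B) ^ T := by
  induction T with
  | zero => simp [avoidSet]
  | succ T ih =>
    have hsplit : avoidSet ξ B (T+1) = avoidSet ξ B T \ blockEv ξ (T * B.length) B := by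
      simp only [avoidSet, Finset.range_add_one]
      rw [Set.diff_eq]
      ext ω
      simp [Set.mem_iInter, and_comm]
    have hmeasA : ∀ T', MeasurableSet (avoidSet ξ B T') := fun T' =>
      MeasurableSet.biInter (Set.to_countable _)
        (fun t _ => (measurable_blockEv hmeas _ _).compl)
    have hinter : μ (avoidSet ξ B T ∩ blockEv ξ (T * B.length) B) =
        μ (avoidSet ξ B T) * ENNReal.ofReal (patProb p B) := by
      rw [avoidSet_preimage]
      exact cyl_block hmeas hindep hdist hp B (T * B.length) _
    have hadd := measure_inter_add_diff (μ := μ) (avoidSet ξ B T)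
      (measurable_blockEv hmeas (T * B.length) B)
    rw [hsplit]
    have hfin1 : μ (avoidSet ξ B T ∩ blockEv ξ (T * B.length) B) ≠ ⊤ := measure_ne_top μ _
    have hfin2 : μ (avoidSet ξ B T \ blockEv ξ (T * B.length) B) ≠ ⊤ := measure_ne_top μ _
    have htr := congrArg ENNReal.toReal hadd
    rw [ENNReal.toReal_add hfin1 hfin2, hinter, ENNReal.toReal_mul,
      ENNReal.toReal_ofReal (patProb_pos hp B).le] at htr
    have : (μ (avoidSet ξ B T \ blockEv ξ (T * B.length) B)).toReal =
        (μ (avoidSet ξ B T)).toReal * (1 - patProb p B) := by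
      rw [ih] at htr ⊢
      linarith
    rw [this, ih]
    ring

lemma measure_neverOcc (hmeas : ∀ n, Measurable (ξ n))
    (hindep : iIndepFun ξ μ)
    (hdist : ∀ n a, μ {ω | ξ n ω = a} = ENNReal.ofReal (p a))
    (hp : ∀ a, 0 < p a) (hpsum : ∑ a, p a = 1) [IsProbabilityMeasure μ]
    (A : List S) (B : List S) (hB : B ≠ []) :
    μ {ω | ∀ k, ¬ B <:+: obsWord A ξ k ω} = 0 := by
  set β := patProb p B with hβ
  have hβ0 : 0 < β := patProb_pos hp B
  have hβ1 : β ≤ 1 := patProb_le_one hp hpsum B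
  have hsub : ∀ T, {ω | ∀ k, ¬ B <:+: obsWord A ξ k ω} ⊆ avoidSet ξ B T := by
    intro T ω hω
    simp only [avoidSet, Set.mem_iInter, Finset.mem_range, Set.mem_compl_iff]
    intro t _ hblock
    exact hω _ (blockEv_infix_obsWord hblock)
  have hbound : ∀ T, (μ {ω | ∀ k, ¬ B <:+: obsWord A ξ k ω}).toReal ≤ (1 - β) ^ T := by
    intro T
    rw [← measure_avoidSet hmeas hindep hdist hp B T]
    exact ENNReal.toReal_mono (measure_ne_top μ _) (measure_mono (hsub T))
  have htend : Filter.Tendsto (fun T => (1 - β) ^ T) Filter.atTop (nhds 0) := by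
    apply tendsto_pow_atTop_nhds_zero_of_lt_one <;> linarith
  have hle : (μ {ω | ∀ k, ¬ B <:+: obsWord A ξ k ω}).toReal ≤ 0 :=
    ge_of_tendsto' htend hbound
  have h0 : (μ {ω | ∀ k, ¬ B <:+: obsWord A ξ k ω}).toReal = 0 :=
    le_antisymm hle ENNReal.toReal_nonneg
  rcases (ENNReal.toReal_eq_zero_iff _).mp h0 with h | h
  · exact h
  · exact absurd h (measure_ne_top μ _)
end Prob2

section Main
variable {S : Type*} [Fintype S] [DecidableEq S] [MeasurableSpace S] [MeasurableSingletonClass S]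
variable {Ω : Type*} [MeasurableSpace Ω]

/-- some pattern has occurred in the first `n` steps -/
def Dset (A : List S) {m : ℕ} (Bs : Fin m → List S) (ξ : ℕ → Ω → S) (n : ℕ) : Set Ω :=
  {ω | ∃ i, Bs i <:+: obsWord A ξ n ω}

/-- first occurrence (of any pattern) happens at time `n` -/
def newOcc (A : List S) {m : ℕ} (Bs : Fin m → List S) (ξ : ℕ → Ω → S) : ℕ → Set Ω
  | 0 => Dset A Bs ξ 0
  | (n+1) => Dset A Bs ξ (n+1) \ Dset A Bs ξ n

/-- last `k` letters observed match the first `k` letters of `B` -/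
def matchSet (A : List S) (ξ : ℕ → Ω → S) (B : List S) (n k : ℕ) : Set Ω :=
  {ω | lastK (obsWord A ξ n ω) k = B.take k}

/-- first occurrence at time `n`, with pattern `i` occurring -/
def winSet (A : List S) {m : ℕ} (Bs : Fin m → List S) (ξ : ℕ → Ω → S) (i : Fin m) (n : ℕ) :
    Set Ω :=
  newOcc A Bs ξ n ∩ {ω | Bs i <:+: obsWord A ξ n ω}

variable {A : List S} {m : ℕ} {Bs : Fin m → List S} {ξ : ℕ → Ω → S}

lemma Dset_eq_preimage (n : ℕ) :
    Dset A Bs ξ n = tupX ξ n ⁻¹' {v | ∃ i, Bs i <:+: A ++ List.ofFn v} := rfl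

lemma matchSet_eq_preimage (B : List S) (n k : ℕ) :
    matchSet A ξ B n k = tupX ξ n ⁻¹' {v | lastK (A ++ List.ofFn v) k = B.take k} := rfl

lemma measurable_Dset (hmeas : ∀ n, Measurable (ξ n)) (n : ℕ) :
    MeasurableSet (Dset A Bs ξ n) := by
  rw [Dset_eq_preimage]; exact measurable_tupX hmeas n (pi_allMeas _)

lemma measurable_matchSet (hmeas : ∀ n, Measurable (ξ n)) (B : List S) (n k : ℕ) :
    MeasurableSet (matchSet A ξ B n k) := by
  rw [matchSet_eq_preimage]; exact measurable_tupX hmeas n (pi_allMeas _)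

lemma measurable_newOcc (hmeas : ∀ n, Measurable (ξ n)) (n : ℕ) :
    MeasurableSet (newOcc A Bs ξ n) := by
  cases n with
  | zero => exact measurable_Dset hmeas 0
  | succ n => exact (measurable_Dset hmeas (n+1)).diff (measurable_Dset hmeas n)

lemma measurable_winSet (hmeas : ∀ n, Measurable (ξ n)) (i : Fin m) (n : ℕ) :
    MeasurableSet (winSet A Bs ξ i n) := by
  refine (measurable_newOcc hmeas n).inter ?_
  have : {ω | Bs i <:+: obsWord A ξ n ω} =
      tupX ξ n ⁻¹' {v | Bs i <:+: A ++ List.ofFn v} := rfl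
  rw [this]; exact measurable_tupX hmeas n (pi_allMeas _)

lemma Dset_mono {n n' : ℕ} (h : n ≤ n') : Dset A Bs ξ n ⊆ Dset A Bs ξ n' := by
  rintro ω ⟨i, hi⟩
  exact ⟨i, infix_obsWord_mono A ξ h hi⟩

lemma matchSet_zero (B : List S) (n : ℕ) : matchSet A ξ B n 0 = Set.univ := by
  ext ω; simp [matchSet, lastK_zero]

lemma matchSet_succ {B : List S} {n k : ℕ} (hk : 1 ≤ k) (hkB : k ≤ B.length) :
    matchSet A ξ B (n+1) k =
      matchSet A ξ B n (k-1) ∩ ξ n ⁻¹' {B.get ⟨k-1, by omega⟩} := by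
  ext ω
  simp only [matchSet, Set.mem_setOf_eq, Set.mem_inter_iff, Set.mem_preimage,
    Set.mem_singleton_iff, obsWord_succ A ξ n ω]
  rw [lastK_concat_take hk hkB]

lemma matchSet_full_subset {j : Fin m} (n : ℕ) :
    matchSet A ξ (Bs j) n (Bs j).length ⊆ Dset A Bs ξ n := by
  intro ω hω
  simp only [matchSet, Set.mem_setOf_eq, List.take_length] at hω
  exact ⟨j, (hω ▸ lastK_suffix (obsWord A ξ n ω) (Bs j).length).isInfix⟩

/-- On `winSet i n`, the pattern `Bs i` is a suffix of the observed word. -/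
lemma winSet_suffix (hA : A ≠ []) (hBA : ∀ i, ¬ Bs i <:+: A.dropLast)
    {i : Fin m} {n : ℕ} {ω : Ω} (hω : ω ∈ winSet A Bs ξ i n) :
    Bs i <:+ obsWord A ξ n ω := by
  obtain ⟨hnew, hocc⟩ := hω
  cases n with
  | zero =>
    simp only [Set.mem_setOf_eq] at hocc
    rw [obsWord_zero] at hocc ⊢
    exact suffix_of_infix_A A hA (hBA i) hocc
  | succ n =>
    obtain ⟨-, hnot⟩ := hnew
    simp only [Set.mem_setOf_eq] at hocc
    have : ¬ Bs i <:+: obsWord A ξ n ω := fun h => hnot ⟨i, h⟩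
    exact suffix_of_new_infix A ξ this hocc

lemma winSet_disjoint (hA : A ≠ []) (hBs : ∀ i, Bs i ≠ [])
    (hsub : ∀ i j, i ≠ j → ¬ Bs i <:+: Bs j) (hBA : ∀ i, ¬ Bs i <:+: A.dropLast)
    {i i' : Fin m} (h : i ≠ i') (n : ℕ) :
    Disjoint (winSet A Bs ξ i n) (winSet A Bs ξ i' n) := by
  rw [Set.disjoint_left]
  intro ω h1 h2
  have s1 := winSet_suffix hA hBA h1
  have s2 := winSet_suffix hA hBA h2
  rcases List.suffix_or_suffix_of_suffix s1 s2 with hs | hs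
  · exact hsub i i' h hs.isInfix
  · exact hsub i' i (Ne.symm h) hs.isInfix

lemma newOcc_eq_union (n : ℕ) :
    newOcc A Bs ξ n = ⋃ i, winSet A Bs ξ i n := by
  ext ω
  simp only [Set.mem_iUnion, winSet, Set.mem_inter_iff, Set.mem_setOf_eq]
  constructor
  · intro h
    have hD : ω ∈ Dset A Bs ξ n := by
      cases n with
      | zero => exact h
      | succ n => exact h.1
    obtain ⟨i, hi⟩ := hD
    exact ⟨i, h, hi⟩
  · rintro ⟨i, h, -⟩
    exact h

/-- The crucial deterministic-match property on `winSet`. -/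
lemma winSet_inter_matchSet (hA : A ≠ []) (hBs : ∀ i, Bs i ≠ [])
    (hsub : ∀ i j, i ≠ j → ¬ Bs i <:+: Bs j) (hBA : ∀ i, ¬ Bs i <:+: A.dropLast)
    {i j : Fin m} {n k : ℕ} (hk1 : 1 ≤ k) (hk2 : k ≤ (Bs j).length) :
    winSet A Bs ξ i n ∩ matchSet A ξ (Bs j) n k =
      if lastK (Bs i) k = (Bs j).take k then winSet A Bs ξ i n else ∅ := by
  split_ifs with hcond
  · -- condition true: k ≤ (Bs i).length automatically
    have hki : k ≤ (Bs i).length := by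
      by_contra hgt
      push_neg at hgt
      have h1 : lastK (Bs i) k = Bs i := by
        rw [lastK]
        simp [Nat.sub_eq_zero_of_le (le_of_lt hgt)]
      have := congrArg List.length hcond
      rw [h1, List.length_take] at this
      omega
    apply Set.inter_eq_self_of_subset_left
    intro ω hω
    have hsuf := winSet_suffix hA hBA hω
    simp only [matchSet, Set.mem_setOf_eq]
    rw [lastK_of_suffix hsuf (le_trans hki le_rfl)]
    exact hcond
  · -- condition false: intersection empty
    rw [Set.eq_empty_iff_forall_notMem]
    rintro ω ⟨hwin, hmatch⟩
    have hsuf := winSet_suffix hA hBA hwin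
    simp only [matchSet, Set.mem_setOf_eq] at hmatch
    by_cases hki : k ≤ (Bs i).length
    · exact hcond (by rw [← lastK_of_suffix hsuf hki]; exact hmatch)
    · push_neg at hki
      -- Bs i is a suffix of take k (Bs j), hence infix of Bs j: contradiction
      have hlenobs : (Bs i).length ≤ (obsWord A ξ n ω).length := hsuf.length_le
      have h1 : Bs i <:+ lastK (obsWord A ξ n ω) k := by
        have e1 : lastK (obsWord A ξ n ω) (Bs i).length = Bs i := suffix_lastK hsuf
        have h2 : (Bs i).length ≤ (lastK (obsWord A ξ n ω) k).length := by
          rw [lastK_length]; omega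
        exact e1 ▸ List.suffix_of_suffix_length_le
          (lastK_suffix _ _) (lastK_suffix _ _) (by rw [e1]; exact h2)
      rw [hmatch] at h1
      have hinf : Bs i <:+: Bs j := h1.isInfix.trans (List.take_prefix k (Bs j)).isInfix
      by_cases hij : i = j
      · subst hij; omega
      · exact hsub i j hij hinf


variable {p : S → ℝ} {μ : Measure Ω}

noncomputable def cden (p : S → ℝ) (B : List S) (α : ℝ) (k : ℕ) : ℝ :=
  patProb p (B.take k) * α ^ k

noncomputable def Vq (μ : Measure Ω) (p : S → ℝ) (A : List S) {m : ℕ} (Bs : Fin m → List S)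
    (ξ : ℕ → Ω → S) (α : ℝ) (j : Fin m) (n : ℕ) : ℝ :=
  α ^ n * ∑ k ∈ Icc 1 (Bs j).length,
    (μ ((Dset A Bs ξ n)ᶜ ∩ matchSet A ξ (Bs j) n k)).toReal / cden p (Bs j) α k

noncomputable def Gq (μ : Measure Ω) (p : S → ℝ) (A : List S) {m : ℕ} (Bs : Fin m → List S)
    (ξ : ℕ → Ω → S) (α : ℝ) (j : Fin m) (n : ℕ) : ℝ :=
  α ^ n * ∑ k ∈ Icc 1 (Bs j).length,
    (μ (newOcc A Bs ξ n ∩ matchSet A ξ (Bs j) n k)).toReal / cden p (Bs j) α k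

lemma cden_pos (hp : ∀ a, 0 < p a) {α : ℝ} (hα0 : 0 < α) (B : List S) (k : ℕ) :
    0 < cden p B α k := mul_pos (patProb_pos hp _) (pow_pos hα0 k)

lemma patProb_append (u v : List S) : patProb p (u ++ v) = patProb p u * patProb p v := by
  simp [patProb]

lemma cden_succ {B : List S} {k : ℕ} (hk : 1 ≤ k) (hkB : k ≤ B.length) (α : ℝ) :
    cden p B α k = cden p B α (k-1) * (p (B.get ⟨k-1, by omega⟩) * α) := by
  have htake : B.take k = B.take (k-1) ++ [B.get ⟨k-1, by omega⟩] := by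
    have h3 := List.take_concat_get (l := B) (i := k-1) (by omega)
    have hk1 : k - 1 + 1 = k := by omega
    rw [hk1] at h3
    rw [← h3]; simp [List.concat_eq_append]
  have hpow : α ^ k = α ^ (k-1) * α := by
    conv_lhs => rw [show k = (k-1) + 1 by omega]
    ring
  rw [cden, htake, patProb_append, hpow, cden]
  simp [patProb]
  ring

/-- One step of the fair-game recursion. -/
lemma step_recursion [IsProbabilityMeasure μ] (hmeas : ∀ n, Measurable (ξ n))
    (hindep : iIndepFun ξ μ)
    (hdist : ∀ n a, μ {ω | ξ n ω = a} = ENNReal.ofReal (p a))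
    (hp : ∀ a, 0 < p a) {α : ℝ} (hα0 : 0 < α)
    (hBs : ∀ i, Bs i ≠ []) (j : Fin m) (n : ℕ) :
    Vq μ p A Bs ξ α j (n+1) + Gq μ p A Bs ξ α j (n+1) =
      α ^ n * (μ ((Dset A Bs ξ n)ᶜ)).toReal + Vq μ p A Bs ξ α j n := by
  set B := Bs j with hB
  set mj := B.length with hmj
  have hmj1 : 1 ≤ mj := by
    simp only [hmj]
    exact List.length_pos_iff.mpr (hBs j)
  set c := cden p B α with hc
  set f : ℕ → ℕ → ℝ := fun n k =>
    (μ ((Dset A Bs ξ n)ᶜ ∩ matchSet A ξ B n k)).toReal / c k with hf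
  -- split across Dset (n+1)
  have h1 : ∀ k, (μ ((Dset A Bs ξ n)ᶜ ∩ matchSet A ξ B (n+1) k)).toReal =
      (μ ((Dset A Bs ξ (n+1))ᶜ ∩ matchSet A ξ B (n+1) k)).toReal +
      (μ (newOcc A Bs ξ (n+1) ∩ matchSet A ξ B (n+1) k)).toReal := by
    intro k
    have hmeasD := measurable_Dset (A := A) (Bs := Bs) hmeas (n+1)
    have hadd := measure_inter_add_diff (μ := μ)
      ((Dset A Bs ξ n)ᶜ ∩ matchSet A ξ B (n+1) k) hmeasD
    have e1 : (Dset A Bs ξ n)ᶜ ∩ matchSet A ξ B (n+1) k ∩ Dset A Bs ξ (n+1) =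
        newOcc A Bs ξ (n+1) ∩ matchSet A ξ B (n+1) k := by
      ext ω
      simp only [Set.mem_inter_iff, Set.mem_compl_iff, newOcc, Set.mem_diff]
      tauto
    have e2 : ((Dset A Bs ξ n)ᶜ ∩ matchSet A ξ B (n+1) k) \ Dset A Bs ξ (n+1) =
        (Dset A Bs ξ (n+1))ᶜ ∩ matchSet A ξ B (n+1) k := by
      ext ω
      simp only [Set.mem_inter_iff, Set.mem_compl_iff, Set.mem_diff]
      have := @Dset_mono S _ _ _ _ Ω _ A m Bs ξ n (n+1) (by omega) ω
      tauto
    rw [e1, e2] at hadd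
    have := congrArg ENNReal.toReal hadd
    rw [ENNReal.toReal_add (measure_ne_top μ _) (measure_ne_top μ _)] at this
    linarith
  -- the one-step bet identity
  have h2 : ∀ k ∈ Icc 1 mj,
      (μ ((Dset A Bs ξ n)ᶜ ∩ matchSet A ξ B (n+1) k)).toReal / c k = f n (k-1) / α := by
    intro k hk
    simp only [Finset.mem_Icc] at hk
    obtain ⟨hk1, hk2⟩ := hk
    set b := B.get ⟨k-1, by omega⟩ with hb
    have estep : (Dset A Bs ξ n)ᶜ ∩ matchSet A ξ B (n+1) k =
        ((Dset A Bs ξ n)ᶜ ∩ matchSet A ξ B n (k-1)) ∩ ξ n ⁻¹' {b} := by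
      rw [matchSet_succ hk1 hk2, Set.inter_assoc]
    have epre : (Dset A Bs ξ n)ᶜ ∩ matchSet A ξ B n (k-1) =
        tupX ξ n ⁻¹' ({v | ∃ i, Bs i <:+: A ++ List.ofFn v}ᶜ ∩
          {v | lastK (A ++ List.ofFn v) (k-1) = B.take (k-1)}) := rfl
    have hμ : μ ((Dset A Bs ξ n)ᶜ ∩ matchSet A ξ B (n+1) k) =
        μ ((Dset A Bs ξ n)ᶜ ∩ matchSet A ξ B n (k-1)) * ENNReal.ofReal (p b) := by
      rw [estep, epre, cyl_step hmeas hindep hdist n _ b]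
    rw [hμ, ENNReal.toReal_mul, ENNReal.toReal_ofReal (hp b).le]
    rw [hf]
    simp only
    rw [hc, cden_succ hk1 hk2 α]
    have hcpos : 0 < cden p B α (k-1) := cden_pos hp hα0 B (k-1)
    have den1 : cden p B α (k-1) * (p b * α) ≠ 0 :=
      ne_of_gt (mul_pos hcpos (mul_pos (hp b) hα0))
    have den2 : cden p B α (k-1) * α ≠ 0 := ne_of_gt (mul_pos hcpos hα0)
    rw [div_div, div_eq_div_iff den1 den2]
    ring
  -- reindex and boundary terms
  have h5 : f n 0 = (μ ((Dset A Bs ξ n)ᶜ)).toReal := by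
    rw [hf]
    simp only
    rw [matchSet_zero, Set.inter_univ, hc, cden]
    simp [patProb]
  have h6 : f n mj = 0 := by
    rw [hf]
    simp only
    have : (Dset A Bs ξ n)ᶜ ∩ matchSet A ξ B n mj = ∅ := by
      rw [Set.eq_empty_iff_forall_notMem]
      rintro ω ⟨hω1, hω2⟩
      exact hω1 (matchSet_full_subset (j := j) n hω2)
    rw [this]
    simp
  have h3 : ∑ k ∈ Icc 1 mj, f n (k-1) = ∑ k ∈ Finset.range mj, f n k := by
    apply Finset.sum_nbij' (fun k => k - 1) (fun k => k + 1) <;> intros <;>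
      simp_all <;> omega
  have h4 : ∑ k ∈ Finset.range mj, f n k = f n 0 + ∑ k ∈ Icc 1 mj, f n k - f n mj := by
    have e1 : ∑ k ∈ Finset.range (mj+1), f n k = ∑ k ∈ Finset.range mj, f n k + f n mj :=
      Finset.sum_range_succ _ _
    have e2 : Finset.range (mj+1) = insert 0 (Icc 1 mj) := by
      ext k; simp; omega
    have e3 : ∑ k ∈ Finset.range (mj+1), f n k = f n 0 + ∑ k ∈ Icc 1 mj, f n k := by
      rw [e2, Finset.sum_insert (by simp)]
    rw [e3] at e1
    linarith
  -- put everything together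
  have lhs_eq : Vq μ p A Bs ξ α j (n+1) + Gq μ p A Bs ξ α j (n+1) =
      α ^ (n+1) * ∑ k ∈ Icc 1 mj,
        (μ ((Dset A Bs ξ n)ᶜ ∩ matchSet A ξ B (n+1) k)).toReal / c k := by
    rw [Vq, Gq, ← mul_add, ← Finset.sum_add_distrib]
    congr 1
    apply Finset.sum_congr rfl
    intro k _
    rw [h1 k, add_div]
  rw [lhs_eq]
  have : ∑ k ∈ Icc 1 mj, (μ ((Dset A Bs ξ n)ᶜ ∩ matchSet A ξ B (n+1) k)).toReal / c k =
      (∑ k ∈ Icc 1 mj, f n (k-1)) / α := by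
    rw [Finset.sum_div]
    exact Finset.sum_congr rfl h2
  rw [this, h3, h4, h5, h6, Vq]
  have hα0' : α ≠ 0 := ne_of_gt hα0
  field_simp
  ring

lemma matchSet_time_zero (B : List S) (k : ℕ) :
    matchSet A ξ B 0 k = if lastK A k = B.take k then (Set.univ : Set Ω) else ∅ := by
  ext ω
  simp only [matchSet, Set.mem_setOf_eq, obsWord_zero]
  split_ifs with h <;> simp [h]

lemma base_identity [IsProbabilityMeasure μ] (hmeas : ∀ n, Measurable (ξ n))
    (hp : ∀ a, 0 < p a) {α : ℝ} (hα0 : 0 < α) (j : Fin m) :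
    Gq μ p A Bs ξ α j 0 + Vq μ p A Bs ξ α j 0 = corr p A (Bs j) α := by
  set B := Bs j with hB
  set mj := B.length with hmj
  have hterm : ∀ k, (μ (newOcc A Bs ξ 0 ∩ matchSet A ξ B 0 k)).toReal +
      (μ ((Dset A Bs ξ 0)ᶜ ∩ matchSet A ξ B 0 k)).toReal =
      (if lastK A k = B.take k then (1:ℝ) else 0) := by
    intro k
    have hadd := measure_inter_add_diff (μ := μ) (matchSet A ξ B 0 k)
      (measurable_Dset (A := A) (Bs := Bs) hmeas 0)
    have e1 : matchSet A ξ B 0 k ∩ Dset A Bs ξ 0 = newOcc A Bs ξ 0 ∩ matchSet A ξ B 0 k := by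
      rw [Set.inter_comm]; rfl
    have e2 : matchSet A ξ B 0 k \ Dset A Bs ξ 0 = (Dset A Bs ξ 0)ᶜ ∩ matchSet A ξ B 0 k := by
      rw [Set.diff_eq, Set.inter_comm]
    rw [e1, e2] at hadd
    have := congrArg ENNReal.toReal hadd
    rw [ENNReal.toReal_add (measure_ne_top μ _) (measure_ne_top μ _)] at this
    rw [this, matchSet_time_zero]
    split_ifs with h <;> simp
  have hsum : Gq μ p A Bs ξ α j 0 + Vq μ p A Bs ξ α j 0 =
      ∑ k ∈ Icc 1 mj, (if lastK A k = B.take k then (1:ℝ) else 0) / cden p B α k := by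
    rw [Gq, Vq, pow_zero, one_mul, one_mul, ← Finset.sum_add_distrib]
    apply Finset.sum_congr rfl
    intro k _
    rw [← add_div, hterm k]
  rw [hsum, corr]
  rw [show min A.length B.length = min A.length mj from rfl]
  have hsubset : Icc 1 (min A.length mj) ⊆ Icc 1 mj := by
    apply Finset.Icc_subset_Icc le_rfl
    omega
  rw [← Finset.sum_subset hsubset]
  · rfl
  · intro k hk hnk
    simp only [Finset.mem_Icc] at hk hnk
    have hAk : A.length < k := by omega
    have : lastK A k ≠ B.take k := by
      intro h
      have := congrArg List.length h
      rw [lastK_length, List.length_take] at this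
      omega
    rw [if_neg this, zero_div]

lemma partial_sum_eq [IsProbabilityMeasure μ] (hmeas : ∀ n, Measurable (ξ n))
    (hindep : iIndepFun ξ μ)
    (hdist : ∀ n a, μ {ω | ξ n ω = a} = ENNReal.ofReal (p a))
    (hp : ∀ a, 0 < p a) {α : ℝ} (hα0 : 0 < α)
    (hBs : ∀ i, Bs i ≠ []) (j : Fin m) (N : ℕ) :
    ∑ n ∈ Finset.range (N+1), Gq μ p A Bs ξ α j n =
      corr p A (Bs j) α + ∑ n ∈ Finset.range N, α ^ n * (μ ((Dset A Bs ξ n)ᶜ)).toReal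
        - Vq μ p A Bs ξ α j N := by
  induction N with
  | zero =>
    simp only [zero_add, Finset.sum_range_one, Finset.range_zero, Finset.sum_empty, add_zero]
    have := base_identity (μ := μ) (A := A) (Bs := Bs) (ξ := ξ) hmeas hp hα0 j
    linarith
  | succ N ih =>
    rw [Finset.sum_range_succ, ih, Finset.sum_range_succ]
    have := step_recursion (μ := μ) (A := A) hmeas hindep hdist hp hα0 hBs j N
    linarith

lemma toReal_prob_le_one [IsProbabilityMeasure μ] (s : Set Ω) : (μ s).toReal ≤ 1 := by
  have h1 : μ s ≤ 1 := prob_le_one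
  have h2 := ENNReal.toReal_mono (by simp) h1
  simpa using h2

lemma Vq_nonneg (hp : ∀ a, 0 < p a) {α : ℝ} (hα0 : 0 < α) (j : Fin m) (n : ℕ) :
    0 ≤ Vq μ p A Bs ξ α j n := by
  apply mul_nonneg (pow_nonneg hα0.le n)
  apply Finset.sum_nonneg
  intro k _
  exact div_nonneg ENNReal.toReal_nonneg (cden_pos hp hα0 _ k).le

lemma Gq_nonneg (hp : ∀ a, 0 < p a) {α : ℝ} (hα0 : 0 < α) (j : Fin m) (n : ℕ) :
    0 ≤ Gq μ p A Bs ξ α j n := by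
  apply mul_nonneg (pow_nonneg hα0.le n)
  apply Finset.sum_nonneg
  intro k _
  exact div_nonneg ENNReal.toReal_nonneg (cden_pos hp hα0 _ k).le

lemma Vq_le [IsProbabilityMeasure μ] (hp : ∀ a, 0 < p a) {α : ℝ} (hα0 : 0 < α)
    (j : Fin m) (n : ℕ) :
    Vq μ p A Bs ξ α j n ≤ α ^ n * ∑ k ∈ Icc 1 (Bs j).length, 1 / cden p (Bs j) α k := by
  apply mul_le_mul_of_nonneg_left _ (pow_nonneg hα0.le n)
  apply Finset.sum_le_sum
  intro k _
  rw [div_le_div_iff_of_pos_right (cden_pos hp hα0 _ k)]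
  exact toReal_prob_le_one _

lemma Gq_le [IsProbabilityMeasure μ] (hp : ∀ a, 0 < p a) {α : ℝ} (hα0 : 0 < α)
    (j : Fin m) (n : ℕ) :
    Gq μ p A Bs ξ α j n ≤ α ^ n * ∑ k ∈ Icc 1 (Bs j).length, 1 / cden p (Bs j) α k := by
  apply mul_le_mul_of_nonneg_left _ (pow_nonneg hα0.le n)
  apply Finset.sum_le_sum
  intro k _
  rw [div_le_div_iff_of_pos_right (cden_pos hp hα0 _ k)]
  exact toReal_prob_le_one _

/-- KEY1: the tsum of `Gq` equals `corr A B_j + Q`. -/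
lemma key1 [IsProbabilityMeasure μ] (hmeas : ∀ n, Measurable (ξ n))
    (hindep : iIndepFun ξ μ)
    (hdist : ∀ n a, μ {ω | ξ n ω = a} = ENNReal.ofReal (p a))
    (hp : ∀ a, 0 < p a) {α : ℝ} (hα0 : 0 < α) (hα1 : α < 1)
    (hBs : ∀ i, Bs i ≠ []) (j : Fin m) :
    ∑' n, Gq μ p A Bs ξ α j n =
      corr p A (Bs j) α + ∑' n, α ^ n * (μ ((Dset A Bs ξ n)ᶜ)).toReal := by
  set Cj := ∑ k ∈ Icc 1 (Bs j).length, 1 / cden p (Bs j) α k with hCj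
  have hgeo : Summable (fun n : ℕ => α ^ n) := summable_geometric_of_lt_one hα0.le hα1
  have htendV : Tendsto (fun N => Vq μ p A Bs ξ α j N) atTop (nhds 0) := by
    have hb : Tendsto (fun N : ℕ => α ^ N * Cj) atTop (nhds 0) := by
      have := (tendsto_pow_atTop_nhds_zero_of_lt_one (by linarith) hα1).mul_const Cj
      simpa using this
    exact squeeze_zero (fun n => Vq_nonneg hp hα0 j n) (fun n => Vq_le hp hα0 j n) hb
  have hsummq : Summable (fun n : ℕ => α ^ n * (μ ((Dset A Bs ξ n)ᶜ)).toReal) := by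
    apply Summable.of_nonneg_of_le
      (fun n => mul_nonneg (pow_nonneg hα0.le n) ENNReal.toReal_nonneg)
      (fun n => ?_) hgeo
    calc α ^ n * (μ ((Dset A Bs ξ n)ᶜ)).toReal ≤ α ^ n * 1 :=
      mul_le_mul_of_nonneg_left (toReal_prob_le_one _) (pow_nonneg hα0.le n)
    _ = α ^ n := by ring
  have hsumG : Summable (fun n => Gq μ p A Bs ξ α j n) := by
    apply Summable.of_nonneg_of_le (fun n => Gq_nonneg hp hα0 j n)
      (fun n => Gq_le hp hα0 j n) (hgeo.mul_right Cj)
  have ht1 : Tendsto (fun N => ∑ n ∈ Finset.range (N+1), Gq μ p A Bs ξ α j n) atTop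
      (nhds (∑' n, Gq μ p A Bs ξ α j n)) :=
    (hsumG.hasSum.tendsto_sum_nat).comp (tendsto_add_atTop_nat 1)
  have ht2 : Tendsto (fun N => corr p A (Bs j) α +
      ∑ n ∈ Finset.range N, α ^ n * (μ ((Dset A Bs ξ n)ᶜ)).toReal - Vq μ p A Bs ξ α j N)
      atTop (nhds (corr p A (Bs j) α + ∑' n, α ^ n * (μ ((Dset A Bs ξ n)ᶜ)).toReal - 0)) :=
    ((tendsto_const_nhds.add hsummq.hasSum.tendsto_sum_nat).sub htendV)
  rw [sub_zero] at ht2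
  have heq : (fun N => ∑ n ∈ Finset.range (N+1), Gq μ p A Bs ξ α j n) =
      fun N => corr p A (Bs j) α + ∑ n ∈ Finset.range N, α ^ n * (μ ((Dset A Bs ξ n)ᶜ)).toReal
        - Vq μ p A Bs ξ α j N := by
    funext N
    exact partial_sum_eq hmeas hindep hdist hp hα0 hBs j N
  rw [heq] at ht1
  exact tendsto_nhds_unique ht1 ht2

lemma measure_newOcc_eq_sum (hmeas : ∀ n, Measurable (ξ n)) (hA : A ≠ [])
    (hBs : ∀ i, Bs i ≠ []) (hsub : ∀ i j, i ≠ j → ¬ Bs i <:+: Bs j)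
    (hBA : ∀ i, ¬ Bs i <:+: A.dropLast) (n : ℕ) (t : Set Ω) (ht : MeasurableSet t) :
    μ (newOcc A Bs ξ n ∩ t) = ∑ i, μ (winSet A Bs ξ i n ∩ t) := by
  rw [newOcc_eq_union, Set.iUnion_inter]
  rw [measure_iUnion ?_ (fun i => (measurable_winSet hmeas i n).inter ht)]
  · exact tsum_fintype _
  · intro i i' h
    exact ((winSet_disjoint hA hBs hsub hBA h n).mono
      Set.inter_subset_left Set.inter_subset_left)

lemma win_match_toReal (hA : A ≠ []) (hBs : ∀ i, Bs i ≠ [])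
    (hsub : ∀ i j, i ≠ j → ¬ Bs i <:+: Bs j) (hBA : ∀ i, ¬ Bs i <:+: A.dropLast)
    {i j : Fin m} {n k : ℕ} (hk1 : 1 ≤ k) (hk2 : k ≤ (Bs j).length) :
    (μ (winSet A Bs ξ i n ∩ matchSet A ξ (Bs j) n k)).toReal =
      (if lastK (Bs i) k = (Bs j).take k then (1:ℝ) else 0) *
        (μ (winSet A Bs ξ i n)).toReal := by
  rw [winSet_inter_matchSet hA hBs hsub hBA hk1 hk2]
  split_ifs with h <;> simp

lemma inner_sum_eq_corr (hp : ∀ a, 0 < p a) {α : ℝ} (hα0 : 0 < α)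
    (i j : Fin m) :
    ∑ k ∈ Icc 1 (Bs j).length,
      (if lastK (Bs i) k = (Bs j).take k then (1:ℝ) else 0) / cden p (Bs j) α k =
      corr p (Bs i) (Bs j) α := by
  rw [corr]
  have hsubset : Icc 1 (min (Bs i).length (Bs j).length) ⊆ Icc 1 (Bs j).length := by
    apply Finset.Icc_subset_Icc le_rfl
    omega
  rw [← Finset.sum_subset hsubset]
  · rfl
  · intro k hk hnk
    simp only [Finset.mem_Icc] at hk hnk
    have hik : (Bs i).length < k := by omega
    have : lastK (Bs i) k ≠ (Bs j).take k := by
      intro h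
      have := congrArg List.length h
      rw [lastK_length, List.length_take] at this
      omega
    rw [if_neg this, zero_div]

lemma Gq_eq_sum_win [IsProbabilityMeasure μ] (hmeas : ∀ n, Measurable (ξ n)) (hA : A ≠ [])
    (hBs : ∀ i, Bs i ≠ []) (hsub : ∀ i j, i ≠ j → ¬ Bs i <:+: Bs j)
    (hBA : ∀ i, ¬ Bs i <:+: A.dropLast) (hp : ∀ a, 0 < p a) {α : ℝ} (hα0 : 0 < α)
    (j : Fin m) (n : ℕ) :
    Gq μ p A Bs ξ α j n = ∑ i, corr p (Bs i) (Bs j) α *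
      (α ^ n * (μ (winSet A Bs ξ i n)).toReal) := by
  rw [Gq]
  have h1 : ∀ k ∈ Icc 1 (Bs j).length,
      (μ (newOcc A Bs ξ n ∩ matchSet A ξ (Bs j) n k)).toReal / cden p (Bs j) α k =
      ∑ i, ((if lastK (Bs i) k = (Bs j).take k then (1:ℝ) else 0) / cden p (Bs j) α k) *
        (μ (winSet A Bs ξ i n)).toReal := by
    intro k hk
    simp only [Finset.mem_Icc] at hk
    rw [measure_newOcc_eq_sum hmeas hA hBs hsub hBA n _
      (measurable_matchSet hmeas (Bs j) n k)]
    rw [ENNReal.toReal_sum (fun i _ => measure_ne_top μ _)]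
    rw [Finset.sum_div]
    apply Finset.sum_congr rfl
    intro i _
    rw [win_match_toReal hA hBs hsub hBA hk.1 hk.2]
    ring
  rw [Finset.sum_congr rfl h1, Finset.sum_comm, Finset.mul_sum]
  apply Finset.sum_congr rfl
  intro i _
  rw [← inner_sum_eq_corr hp hα0 i j, Finset.sum_mul, Finset.mul_sum]
  apply Finset.sum_congr rfl
  intro k _
  ring

/-- Abel-type series identity. -/
lemma tsum_newOcc_eq [IsProbabilityMeasure μ] (hmeas : ∀ n, Measurable (ξ n))
    {α : ℝ} (hα0 : 0 < α) (hα1 : α < 1) :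
    ∑' n, α ^ n * (μ (newOcc A Bs ξ n)).toReal =
      (1 - α) * ∑' n, α ^ n * (μ (Dset A Bs ξ n)).toReal := by
  set r : ℕ → ℝ := fun n => (μ (Dset A Bs ξ n)).toReal with hr
  have hgeo : Summable (fun n : ℕ => α ^ n) := summable_geometric_of_lt_one hα0.le hα1
  have hbound : ∀ (s : ℕ → Set Ω), Summable (fun n => α ^ n * (μ (s n)).toReal) := by
    intro s
    apply Summable.of_nonneg_of_le
      (fun n => mul_nonneg (pow_nonneg hα0.le n) ENNReal.toReal_nonneg) (fun n => ?_) hgeo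
    calc α ^ n * (μ (s n)).toReal ≤ α ^ n * 1 :=
      mul_le_mul_of_nonneg_left (toReal_prob_le_one _) (pow_nonneg hα0.le n)
    _ = α ^ n := by ring
  have hS : Summable (fun n => α ^ n * r n) := hbound _
  have hnew : Summable (fun n => α ^ n * (μ (newOcc A Bs ξ n)).toReal) := hbound _
  have hd : ∀ n, (μ (newOcc A Bs ξ (n+1))).toReal = r (n+1) - r n := by
    intro n
    have h1 : μ (newOcc A Bs ξ (n+1)) = μ (Dset A Bs ξ (n+1)) - μ (Dset A Bs ξ n) :=
      measure_diff (Dset_mono (by omega)) (measurable_Dset hmeas n).nullMeasurableSet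
        (measure_ne_top μ _)
    rw [h1, ENNReal.toReal_sub_of_le (measure_mono (Dset_mono (by omega))) (measure_ne_top μ _)]
  -- expand both sides using tsum_eq_zero_add
  rw [Summable.tsum_eq_zero_add hnew, Summable.tsum_eq_zero_add hS]
  simp only [pow_zero, one_mul, pow_succ]
  have e1 : ∀ n:ℕ, α ^ n * α * (μ (newOcc A Bs ξ (n+1))).toReal =
      α ^ n * α * r (n+1) - α * (α ^ n * r n) := by
    intro n
    rw [hd n]
    ring
  rw [tsum_congr e1, Summable.tsum_sub ?s1 ?s2]
  case s1 =>
    have := (hbound (fun n => Dset A Bs ξ (n+1)))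
    apply Summable.congr (this.mul_left α)
    intro n
    simp only [hr]
    ring
  case s2 => exact (hS.mul_left α)
  have e2 : ∑' n:ℕ, α * (α ^ n * r n) = α * ∑' n, α ^ n * r n := tsum_mul_left
  have e3 : ∑' n:ℕ, α ^ n * α * r (n+1) = (∑' n, α ^ n * r n) - r 0 := by
    rw [Summable.tsum_eq_zero_add hS]
    simp only [pow_zero, one_mul]
    have h5 : ∀ n:ℕ, α ^ n * α * r (n+1) = α ^ (n+1) * r (n+1) := fun n => by ring
    rw [tsum_congr h5]
    ring
  rw [e2, e3]
  have hnew0 : (μ (newOcc A Bs ξ 0)).toReal = r 0 := rfl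
  rw [hnew0]
  ring

def occSet (A : List S) (B : List S) (ξ : ℕ → Ω → S) (n : ℕ) : Set Ω :=
  {ω | B <:+: obsWord A ξ n ω}

def fullOcc (A : List S) {m : ℕ} (Bs : Fin m → List S) (ξ : ℕ → Ω → S) : Set Ω :=
  {ω | ∀ i, ∃ k, Bs i <:+: obsWord A ξ k ω}

lemma measurable_occSet (hmeas : ∀ n, Measurable (ξ n)) (B : List S) (n : ℕ) :
    MeasurableSet (occSet A B ξ n) := by
  have : occSet A B ξ n = Dset A (fun _ : Fin 1 => B) ξ n := by
    ext ω; simp [occSet, Dset]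
  rw [this]
  exact measurable_Dset hmeas n

lemma measure_fullOcc_compl (hmeas : ∀ n, Measurable (ξ n))
    (hindep : iIndepFun ξ μ)
    (hdist : ∀ n a, μ {ω | ξ n ω = a} = ENNReal.ofReal (p a))
    (hp : ∀ a, 0 < p a) (hpsum : ∑ a, p a = 1) [IsProbabilityMeasure μ]
    (hBs : ∀ i, Bs i ≠ []) :
    μ (fullOcc A Bs ξ)ᶜ = 0 := by
  have : (fullOcc A Bs ξ)ᶜ = ⋃ i, {ω | ∀ k, ¬ Bs i <:+: obsWord A ξ k ω} := by
    ext ω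
    simp only [fullOcc, Set.mem_compl_iff, Set.mem_setOf_eq, Set.mem_iUnion]
    push_neg
    rfl
  rw [this]
  exact measure_iUnion_null fun i =>
    measure_neverOcc hmeas hindep hdist hp hpsum A (Bs i) (hBs i)

lemma hitTime_le_iff {B : List S} {ω : Ω} (hne : ∃ k, B <:+: obsWord A ξ k ω) (n : ℕ) :
    hitTime A B ξ ω ≤ n ↔ B <:+: obsWord A ξ n ω := by
  constructor
  · intro h
    have hmem : hitTime A B ξ ω ∈ {k : ℕ | B <:+: obsWord A ξ k ω} := Nat.sInf_mem hne
    exact infix_obsWord_mono A ξ h hmem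
  · intro h
    exact Nat.sInf_le h

lemma hitTimeMin_le (ω : Ω) (i : Fin m) : hitTimeMin A Bs ξ ω ≤ hitTime A (Bs i) ξ ω :=
  ciInf_le (OrderBot.bddBelow _) i

lemma hitTimeMin_attained (hm : 0 < m) (ω : Ω) :
    ∃ i, hitTimeMin A Bs ξ ω = hitTime A (Bs i) ξ ω := by
  haveI : Nonempty (Fin m) := ⟨⟨0, hm⟩⟩
  have h := Nat.sInf_mem (Set.range_nonempty (fun i => hitTime A (Bs i) ξ ω))
  obtain ⟨i, hi⟩ := h
  exact ⟨i, hi.symm⟩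

lemma Dset_iff_le (hm : 0 < m) {ω : Ω} (hω : ω ∈ fullOcc A Bs ξ) (n : ℕ) :
    ω ∈ Dset A Bs ξ n ↔ hitTimeMin A Bs ξ ω ≤ n := by
  constructor
  · rintro ⟨i, hi⟩
    exact le_trans (hitTimeMin_le (A := A) (Bs := Bs) (ξ := ξ) ω i) ((hitTime_le_iff (A := A) (B := Bs i) (hω i) n).mpr hi)
  · intro h
    obtain ⟨i, hi⟩ := hitTimeMin_attained (A := A) (Bs := Bs) (ξ := ξ) hm ω
    rw [hi] at h
    exact ⟨i, (hitTime_le_iff (A := A) (B := Bs i) (hω i) n).mp h⟩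

lemma tau_eq_iff_newOcc (hm : 0 < m) {ω : Ω} (hω : ω ∈ fullOcc A Bs ξ) (n : ℕ) :
    hitTimeMin A Bs ξ ω = n ↔ ω ∈ newOcc A Bs ξ n := by
  cases n with
  | zero =>
    rw [show (newOcc A Bs ξ 0) = Dset A Bs ξ 0 from rfl, Dset_iff_le hm hω 0]
    omega
  | succ n =>
    have h1 := Dset_iff_le hm hω (n+1)
    have h2 := Dset_iff_le hm hω n
    simp only [newOcc, Set.mem_diff]
    rw [h1, h2]
    omega

lemma measurable_hitTime (hmeas : ∀ n, Measurable (ξ n)) (B : List S) :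
    Measurable (fun ω => hitTime A B ξ ω) := by
  apply measurable_to_countable'
  intro y
  cases y with
  | zero =>
    have : (fun ω => hitTime A B ξ ω) ⁻¹' {0} =
        occSet A B ξ 0 ∪ ⋂ k, (occSet A B ξ k)ᶜ := by
      ext ω
      simp only [Set.mem_preimage, Set.mem_singleton_iff, hitTime, Set.mem_union,
        Set.mem_iInter, Set.mem_compl_iff, occSet, Set.mem_setOf_eq, Nat.sInf_eq_zero]
      constructor
      · rintro (h | h)
        · exact Or.inl h
        · right; intro k hk; rw [Set.eq_empty_iff_forall_notMem] at h; exact h k hk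
      · rintro (h | h)
        · exact Or.inl h
        · right; rw [Set.eq_empty_iff_forall_notMem]; exact h
    rw [this]
    exact (measurable_occSet hmeas B 0).union
      (MeasurableSet.iInter fun k => (measurable_occSet hmeas B k).compl)
  | succ y =>
    have : (fun ω => hitTime A B ξ ω) ⁻¹' {y+1} =
        occSet A B ξ (y+1) ∩ (occSet A B ξ y)ᶜ := by
      ext ω
      simp only [Set.mem_preimage, Set.mem_singleton_iff, Set.mem_inter_iff,
        Set.mem_compl_iff, occSet, Set.mem_setOf_eq]
      constructor
      · intro h
        have hne : {k : ℕ | B <:+: obsWord A ξ k ω}.Nonempty := by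
          by_contra hc
          rw [Set.not_nonempty_iff_eq_empty] at hc
          rw [hitTime, hc, Nat.sInf_empty] at h
          omega
        have hmem := Nat.sInf_mem hne
        rw [hitTime] at h
        constructor
        · rw [← h]; exact hmem
        · intro hocc
          have := Nat.sInf_le (s := {k : ℕ | B <:+: obsWord A ξ k ω}) hocc
          omega
      · rintro ⟨h1, h2⟩
        have hle : hitTime A B ξ ω ≤ y + 1 := Nat.sInf_le h1
        have hgt : ¬ hitTime A B ξ ω ≤ y := by
          intro hc
          have hne : {k : ℕ | B <:+: obsWord A ξ k ω}.Nonempty := ⟨y+1, h1⟩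
          have hmem := Nat.sInf_mem hne
          exact h2 (infix_obsWord_mono A ξ hc hmem)
        omega
    rw [this]
    exact (measurable_occSet hmeas B (y+1)).inter (measurable_occSet hmeas B y).compl

lemma measurable_hitTimeMin (hmeas : ∀ n, Measurable (ξ n)) (hm : 0 < m) :
    Measurable (fun ω => hitTimeMin A Bs ξ ω) := by
  apply measurable_to_countable'
  intro c
  have : (fun ω => hitTimeMin A Bs ξ ω) ⁻¹' {c} =
      (⋂ i, {ω | c ≤ hitTime A (Bs i) ξ ω}) ∩ (⋃ i, {ω | hitTime A (Bs i) ξ ω = c}) := by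
    ext ω
    simp only [Set.mem_preimage, Set.mem_singleton_iff, Set.mem_inter_iff, Set.mem_iInter,
      Set.mem_iUnion, Set.mem_setOf_eq]
    constructor
    · intro h
      refine ⟨fun i => h ▸ hitTimeMin_le (A := A) (Bs := Bs) (ξ := ξ) ω i, ?_⟩
      obtain ⟨i, hi⟩ := hitTimeMin_attained (A := A) (Bs := Bs) (ξ := ξ) hm ω
      exact ⟨i, by omega⟩
    · rintro ⟨h1, ⟨i, hi⟩⟩
      have hle := hitTimeMin_le (A := A) (Bs := Bs) (ξ := ξ) ω i
      obtain ⟨i', hi'⟩ := hitTimeMin_attained (A := A) (Bs := Bs) (ξ := ξ) hm ω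
      have := h1 i'
      omega
  rw [this]
  refine (MeasurableSet.iInter fun i => ?_).inter (MeasurableSet.iUnion fun i => ?_)
  · exact measurable_hitTime hmeas (Bs i) (Set.to_countable _).measurableSet
  · exact measurable_hitTime hmeas (Bs i) (measurableSet_singleton c)

/-- The main integral identity. -/
lemma integral_alpha_tau [IsProbabilityMeasure μ] (hmeas : ∀ n, Measurable (ξ n))
    (hindep : iIndepFun ξ μ)
    (hdist : ∀ n a, μ {ω | ξ n ω = a} = ENNReal.ofReal (p a))
    (hp : ∀ a, 0 < p a) (hpsum : ∑ a, p a = 1)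
    (hBs : ∀ i, Bs i ≠ []) (hm : 0 < m) {α : ℝ} (hα0 : 0 < α) (hα1 : α < 1) :
    ∫ ω, α ^ hitTimeMin A Bs ξ ω ∂μ = ∑' n, α ^ n * (μ (newOcc A Bs ξ n)).toReal := by
  set f : ℕ → Ω → ℝ := fun n => Set.indicator {ω | hitTimeMin A Bs ξ ω = n} (fun _ => α ^ n)
    with hfdef
  have hsets : ∀ n, MeasurableSet {ω | hitTimeMin A Bs ξ ω = n} := fun n =>
    measurable_hitTimeMin hmeas hm (measurableSet_singleton n)
  have hpt : ∀ ω, (∑' n, f n ω) = α ^ hitTimeMin A Bs ξ ω := by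
    intro ω
    rw [tsum_eq_single (hitTimeMin A Bs ξ ω) ?_]
    · simp [hfdef, Set.indicator_of_mem, Set.mem_setOf_eq]
    · intro n hn
      simp only [hfdef]
      apply Set.indicator_of_notMem
      simp only [Set.mem_setOf_eq]
      omega
  have hint : ∫ ω, α ^ hitTimeMin A Bs ξ ω ∂μ = ∑' n, ∫ ω, f n ω ∂μ := by
    rw [← integral_tsum ?_ ?_]
    · apply integral_congr_ae
      filter_upwards with ω
      exact (hpt ω).symm
    · intro n
      exact ((measurable_const.indicator (hsets n)).aestronglyMeasurable)
    · -- lintegral bound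
      have hb : ∀ n : ℕ, ∫⁻ ω, ‖f n ω‖₊ ∂μ ≤ ENNReal.ofReal α ^ n := by
        intro n
        have : ∀ ω, (‖f n ω‖₊ : ℝ≥0∞) =
            Set.indicator {ω | hitTimeMin A Bs ξ ω = n} (fun _ => (‖α ^ n‖₊ : ℝ≥0∞)) ω := by
          intro ω
          simp only [hfdef]
          by_cases h : ω ∈ {ω | hitTimeMin A Bs ξ ω = n}
          · rw [Set.indicator_of_mem h, Set.indicator_of_mem h]
          · rw [Set.indicator_of_notMem h, Set.indicator_of_notMem h]; simp
        rw [lintegral_congr this, lintegral_indicator_const (hsets n)]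
        calc (‖α ^ n‖₊ : ℝ≥0∞) * μ {ω | hitTimeMin A Bs ξ ω = n} ≤ (‖α ^ n‖₊ : ℝ≥0∞) * 1 := by
              gcongr
              exact prob_le_one
        _ = (‖α ^ n‖₊ : ℝ≥0∞) := by ring
        _ = ENNReal.ofReal (α ^ n) := by
              rw [Real.nnnorm_of_nonneg (pow_nonneg hα0.le n), ENNReal.ofReal]
              congr 1
              ext
              simp [max_eq_left (pow_nonneg hα0.le n)]
        _ = ENNReal.ofReal α ^ n := by rw [ENNReal.ofReal_pow hα0.le]
      apply ne_top_of_le_ne_top ?_ (ENNReal.tsum_le_tsum hb)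
      rw [ENNReal.tsum_geometric]
      simp only [ne_eq, ENNReal.inv_eq_top]
      intro hc
      rw [tsub_eq_zero_iff_le] at hc
      have : ENNReal.ofReal α < 1 := by
        rw [← ENNReal.ofReal_one]
        exact ENNReal.ofReal_lt_ofReal_iff_of_nonneg hα0.le |>.mpr hα1
      exact absurd hc (not_le.mpr this)
  rw [hint]
  apply tsum_congr
  intro n
  have h1 : ∫ ω, f n ω ∂μ = (μ {ω | hitTimeMin A Bs ξ ω = n}).toReal * α ^ n := by
    rw [hfdef]
    simp only
    rw [integral_indicator_const _ (hsets n)]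
    simp [smul_eq_mul, Measure.real]
  rw [h1]
  have h2 : μ {ω | hitTimeMin A Bs ξ ω = n} = μ (newOcc A Bs ξ n) := by
    have hconull : μ (fullOcc A Bs ξ)ᶜ = 0 :=
      measure_fullOcc_compl hmeas hindep hdist hp hpsum hBs
    rw [← measure_inter_conull (s := {ω | hitTimeMin A Bs ξ ω = n}) hconull,
      ← measure_inter_conull (s := newOcc A Bs ξ n) hconull]
    congr 1
    ext ω
    simp only [Set.mem_inter_iff, Set.mem_setOf_eq]
    constructor
    · rintro ⟨h, hf⟩
      exact ⟨(tau_eq_iff_newOcc hm hf n).mp h, hf⟩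
    · rintro ⟨h, hf⟩
      exact ⟨(tau_eq_iff_newOcc hm hf n).mpr h, hf⟩
  rw [h2]
  ring

end Main

/-- For every `0 < α < 1` with `(1-α)·det 𝓑(α) + ∑_j det 𝓑^j(α) ≠ 0`,
`Q_τ(α) = (det 𝓑(α) − ∑_k det 𝓑_k(α)) / ((1-α)·det 𝓑(α) + ∑_j det 𝓑^j(α))`. -/
theorem QGF_eq_det_ratio
    {S : Type*} [Fintype S] [DecidableEq S] [MeasurableSpace S] [MeasurableSingletonClass S]
    {Ω : Type*} [MeasurableSpace Ω] (μ : Measure Ω) [IsProbabilityMeasure μ]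
    (p : S → ℝ) (hp : ∀ a, 0 < p a) (hpsum : ∑ a, p a = 1)
    (ξ : ℕ → Ω → S) (hmeas : ∀ n, Measurable (ξ n))
    (hindep : iIndepFun ξ μ)
    (hdist : ∀ n a, μ {ω | ξ n ω = a} = ENNReal.ofReal (p a))
    (A : List S) (hA : A ≠ []) {m : ℕ} (Bs : Fin m → List S) (hBs : ∀ i, Bs i ≠ [])
    (hsub : ∀ i j, i ≠ j → ¬ Bs i <:+: Bs j)
    (hBA : ∀ i, ¬ Bs i <:+: A.dropLast)
    (hfin : μ {ω | ∃ k, ∃ i, Bs i <:+: obsWord A ξ k ω} = 1)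
    (α : ℝ) (hα0 : 0 < α) (hα1 : α < 1)
    (hden : (1 - α) * (corrMat p Bs α).det +
      ∑ j : Fin m, ((corrMat p Bs α).updateCol j fun _ => (1 : ℝ)).det ≠ 0) :
    QGF μ A Bs ξ α =
      ((corrMat p Bs α).det -
          ∑ k : Fin m, ((corrMat p Bs α).updateCol k (corrCol p A Bs α)).det) /
        ((1 - α) * (corrMat p Bs α).det +
          ∑ j : Fin m, ((corrMat p Bs α).updateCol j fun _ => (1 : ℝ)).det) := by
  -- the case `m = 0` contradicts `hfin`
  rcases Nat.eq_zero_or_pos m with rfl | hm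
  · exfalso
    have he : {ω | ∃ k, ∃ i : Fin 0, Bs i <:+: obsWord A ξ k ω} = ∅ := by
      ext ω; simp
    rw [he] at hfin
    simp at hfin
  have hα1' : (1:ℝ) - α ≠ 0 := by linarith
  set S0 : ℝ := ∑' n, α ^ n * (μ (Dset A Bs ξ n)).toReal with hS0
  set Qv : ℝ := ∑' n, α ^ n * (μ ((Dset A Bs ξ n)ᶜ)).toReal with hQvdef
  have hgeo : Summable (fun n : ℕ => α ^ n) := summable_geometric_of_lt_one hα0.le hα1
  have hbound : ∀ (s : ℕ → Set Ω), Summable (fun n => α ^ n * (μ (s n)).toReal) := by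
    intro s
    apply Summable.of_nonneg_of_le
      (fun n => mul_nonneg (pow_nonneg hα0.le n) ENNReal.toReal_nonneg) (fun n => ?_) hgeo
    calc α ^ n * (μ (s n)).toReal ≤ α ^ n * 1 :=
      mul_le_mul_of_nonneg_left (toReal_prob_le_one _) (pow_nonneg hα0.le n)
    _ = α ^ n := by ring
  have hQrel : Qv = (1-α)⁻¹ - S0 := by
    rw [hQvdef, hS0]
    have hcompl : ∀ n:ℕ, α ^ n * (μ ((Dset A Bs ξ n)ᶜ)).toReal =
        α ^ n - α ^ n * (μ (Dset A Bs ξ n)).toReal := by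
      intro n
      have h1 : μ ((Dset A Bs ξ n)ᶜ) = 1 - μ (Dset A Bs ξ n) :=
        prob_compl_eq_one_sub (measurable_Dset hmeas n)
      rw [h1, ENNReal.toReal_sub_of_le prob_le_one (by simp)]
      simp
      ring
    rw [tsum_congr hcompl, Summable.tsum_sub hgeo (hbound _), tsum_geometric_of_lt_one hα0.le hα1]
  have hNew : ∑' n, α ^ n * (μ (newOcc A Bs ξ n)).toReal = (1-α) * S0 :=
    tsum_newOcc_eq hmeas hα0 hα1
  have hInt : ∫ ω, α ^ hitTimeMin A Bs ξ ω ∂μ = (1-α) * S0 := by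
    rw [integral_alpha_tau hmeas hindep hdist hp hpsum hBs hm hα0 hα1, hNew]
  have hQGF : QGF μ A Bs ξ α = Qv := by
    rw [QGF, hInt, hQrel]
    field_simp
  set x : Fin m → ℝ := fun i => ∑' n, α ^ n * (μ (winSet A Bs ξ i n)).toReal with hx
  have hsume : ∀ i, Summable (fun n => α ^ n * (μ (winSet A Bs ξ i n)).toReal) :=
    fun i => hbound _
  have hxsum : ∀ j, ∑ i, corr p (Bs i) (Bs j) α * x i = corr p A (Bs j) α + Qv := by
    intro j
    have h1 := key1 (μ:=μ) (A:=A) (Bs:=Bs) (ξ:=ξ) hmeas hindep hdist hp hα0 hα1 hBs j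
    rw [← h1]
    rw [tsum_congr (fun n => Gq_eq_sum_win (μ:=μ) hmeas hA hBs hsub hBA hp hα0 j n)]
    rw [Summable.tsum_finsetSum (fun i _ => (hsume i).mul_left _)]
    apply Finset.sum_congr rfl
    intro i _
    rw [tsum_mul_left]
  have hxtot : ∑ i, x i = 1 - (1-α) * Qv := by
    have h1 : ∑ i, x i = ∑' n, α ^ n * (μ (newOcc A Bs ξ n)).toReal := by
      rw [← Summable.tsum_finsetSum (fun i (_ : i ∈ Finset.univ) => hsume i)]
      apply tsum_congr
      intro n
      have h2 : μ (newOcc A Bs ξ n) = ∑ i, μ (winSet A Bs ξ i n) := by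
        have h3 := measure_newOcc_eq_sum (μ := μ) hmeas hA hBs hsub hBA n Set.univ
          MeasurableSet.univ
        simpa using h3
      rw [h2, ENNReal.toReal_sum (fun i _ => measure_ne_top μ _), Finset.mul_sum]
    rw [h1, hNew, hQrel]
    field_simp
    ring
  -- the matrix computation
  set M : Matrix (Fin m) (Fin m) ℝ := corrMat p Bs α with hM
  have hmv : M.mulVec x = fun j => corrCol p A Bs α j + Qv := by
    funext j
    show ∑ i, M j i * x i = corrCol p A Bs α j + Qv
    have hentry : ∀ i : Fin m, M j i = corr p (Bs i) (Bs j) α := fun i => rfl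
    rw [Finset.sum_congr rfl (fun i _ => by rw [hentry i])]
    rw [hxsum j]
    rfl
  have hcr : ∀ k, (M.updateCol k (M.mulVec x)).det = M.det * x k := by
    intro k
    have h1 : Matrix.cramer M (M.mulVec x) = M.det • x := by
      rw [Matrix.cramer_eq_adjugate_mulVec, Matrix.mulVec_mulVec, Matrix.adjugate_mul,
        Matrix.smul_mulVec, Matrix.one_mulVec]
    have h2 := congrFun h1 k
    rw [Matrix.cramer_apply] at h2
    rw [h2]
    simp [smul_eq_mul]
  have hsplit : ∀ k, (M.updateCol k (M.mulVec x)).det =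
      (M.updateCol k (corrCol p A Bs α)).det +
        Qv * (M.updateCol k fun _ => (1:ℝ)).det := by
    intro k
    rw [hmv]
    have hcol : (fun j => corrCol p A Bs α j + Qv) =
        (fun j => corrCol p A Bs α j) + (Qv • fun _ : Fin m => (1:ℝ)) := by
      funext j
      simp [Pi.add_apply, Pi.smul_apply, smul_eq_mul]
    rw [hcol, Matrix.det_updateCol_add, Matrix.det_updateCol_smul]
  have hsum : M.det * (1 - (1-α)*Qv) =
      (∑ k, (M.updateCol k (corrCol p A Bs α)).det) +
        Qv * ∑ k, (M.updateCol k fun _ => (1:ℝ)).det := by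
    calc M.det * (1 - (1-α)*Qv) = M.det * ∑ k, x k := by rw [hxtot]
    _ = ∑ k, M.det * x k := by rw [Finset.mul_sum]
    _ = ∑ k, (M.updateCol k (M.mulVec x)).det := by
        exact Finset.sum_congr rfl fun k _ => (hcr k).symm
    _ = ∑ k, ((M.updateCol k (corrCol p A Bs α)).det +
          Qv * (M.updateCol k fun _ => (1:ℝ)).det) :=
        Finset.sum_congr rfl fun k _ => hsplit k
    _ = _ := by rw [Finset.sum_add_distrib, Finset.mul_sum]
  rw [hQGF, eq_div_iff hden]
  linear_combination -hsum
end
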